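/- arXiv:math/9411207 — 4 statements merged into one kernel-verified Lean document; each statement's English description precedes it below -/
import Mathlib

section
/- Let n ≥ 1 and let a < 2^n − 1 be an element of A_n, with period p_n(a) = 2^k (so k ≥ 1). Then there exists c with a *_n c ≥ 2^{n−1}, and the least such c (the threshold t_n(a)) satisfies t_n(a) ≤ 2^{k−1}. -/
open Fin.NatCast


/-- The unique left self-distributive operation on `Fin (2^m)` with `a * 1 = a + 1`. -/
def IsCyclicLD (m : ℕ) (op : Fin (2^m) → Fin (2^m) → Fin (2^m)) : Prop :=
  (∀ a b c, op a (op b c) = op (op a b) (op a c)) ∧ ∀ a, op a 1 = a + 1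

/-- The period `p_m(a)`: the least positive `p` with `a * (p mod 2^m) = 0`. -/
noncomputable def period (m : ℕ) (op : Fin (2^m) → Fin (2^m) → Fin (2^m))
    (a : Fin (2^m)) : ℕ :=
  sInf {p : ℕ | 0 < p ∧ op a ((p : ℕ) : Fin (2^m)) = 0}

namespace LaverWork

variable {m : ℕ} {op : Fin (2^m) → Fin (2^m) → Fin (2^m)}

/-- rank: 0 counts as 2^m -/
def rk (x : Fin (2^m)) : ℕ := if x = 0 then 2^m else x.val

lemma rk_le (x : Fin (2^m)) : rk x ≤ 2^m := by
  unfold rk; split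
  · exact le_refl _
  · exact le_of_lt x.isLt

lemma rk_of_ne {x : Fin (2^m)} (h : x ≠ 0) : rk x = x.val := if_neg h

lemma rk_zero : rk (0 : Fin (2^m)) = 2^m := if_pos rfl

lemma rk_eq_top_iff {x : Fin (2^m)} : rk x = 2^m ↔ x = 0 := by
  constructor
  · intro h
    by_contra hx
    rw [rk_of_ne hx] at h
    exact absurd h (Nat.ne_of_lt x.isLt)
  · intro h; rw [h]; exact rk_zero

lemma val_lt_rk_of_ne {x : Fin (2^m)} (h : x ≠ 0) : 0 < rk x := by
  rw [rk_of_ne h]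
  exact Nat.pos_of_ne_zero (fun hv => h (Fin.ext hv))

section Basic
variable (hop : IsCyclicLD m op)
include hop

lemma op_one (a : Fin (2^m)) : op a 1 = a + 1 := hop.2 a

lemma ld (a b c : Fin (2^m)) : op a (op b c) = op (op a b) (op a c) := hop.1 a b c

/-- fundamental recursion -/
lemma rec_col (a b : Fin (2^m)) : op a (b + 1) = op (op a b) (a + 1) := by
  have h1 : b + 1 = op b 1 := (hop.2 b).symm
  rw [h1, hop.1 a b 1, hop.2 a]

lemma R_succ (a : Fin (2^m)) (c : ℕ) :
    op a ((c+1 : ℕ) : Fin (2^m)) = op (op a ((c:ℕ) : Fin (2^m))) (a + 1) := by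
  rw [Nat.cast_add_one, rec_col hop]

/-- row of 0 is the identity, for positive casts first -/
lemma op_zero_cast (c : ℕ) : op 0 ((c+1 : ℕ) : Fin (2^m)) = ((c+1 : ℕ) : Fin (2^m)) := by
  induction c with
  | zero => simpa using hop.2 0
  | succ c ih =>
      rw [R_succ hop, ih]
      have h0 : (0 : Fin (2^m)) + 1 = 1 := zero_add _
      rw [h0, hop.2]
      rw [Nat.cast_add_one (c+1)]

lemma op_zero_left (b : Fin (2^m)) : op 0 b = b := by
  by_cases hb : b = 0
  · subst hb
    have hm : 0 < 2^m := pow_pos (by norm_num) m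
    have h2 : ((2^m : ℕ) : Fin (2^m)) = 0 := by
      ext
      simp [Fin.val_natCast]
    have h3 : ((2^m - 1 + 1 : ℕ) : Fin (2^m)) = 0 := by
      have he : 2^m - 1 + 1 = 2^m := Nat.succ_pred_eq_of_pos hm
      rw [he]; exact h2
    have := op_zero_cast hop (2^m - 1)
    rw [h3] at this
    exact this
  · have hv : 0 < b.val := Nat.pos_of_ne_zero (fun h => hb (Fin.ext h))
    have hb2 : b = ((b.val - 1 + 1 : ℕ) : Fin (2^m)) := by
      have : b.val - 1 + 1 = b.val := Nat.succ_pred_eq_of_pos hv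
      rw [this, Fin.cast_val_eq_self]
    rw [hb2, op_zero_cast hop]

end Basic
section Basic2
variable (hop : IsCyclicLD m op)
include hop

lemma val_add_one_of_ne {x : Fin (2^m)} (h : x + 1 ≠ 0) : (x + 1).val = x.val + 1 := by
  rcases Nat.eq_zero_or_pos m with hm | hm
  · exfalso; apply h
    have h1 : (2:ℕ)^m = 1 := by subst hm; norm_num
    ext
    have h2 := (x+1).isLt
    have h3 : (0 : Fin (2^m)).val = 0 := rfl
    omega
  · have h2 : 2 ≤ 2^m := by
      calc 2 = 2^1 := (pow_one 2).symm
      _ ≤ 2^m := Nat.pow_le_pow_right (by norm_num) hm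
    have hone : (1 : Fin (2^m)).val = 1 := by
      rw [Fin.val_one']; exact Nat.mod_eq_of_lt h2
    have hadd : (x + 1).val = (x.val + 1) % 2^m := by
      rw [Fin.add_def, hone]
    by_cases hx : x.val + 1 = 2^m
    · exfalso; apply h; ext; rw [hadd, hx, Nat.mod_self]; rfl
    · rw [hadd, Nat.mod_eq_of_lt (lt_of_le_of_ne x.isLt hx)]

lemma good_all : ∀ x : Fin (2^m), op x 0 = 0 ∧ (x ≠ 0 → ∀ b, rk x < rk (op x b)) := by
  have main : ∀ t : ℕ, ∀ x : Fin (2^m), 2^m - rk x ≤ t →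
      op x 0 = 0 ∧ (x ≠ 0 → ∀ b, rk x < rk (op x b)) := by
    intro t
    induction t with
    | zero =>
        intro x hx
        have hx0 : x = 0 := by
          have := rk_le x
          have : rk x = 2^m := by omega
          exact rk_eq_top_iff.mp this
        subst hx0
        exact ⟨op_zero_left hop 0, fun h => absurd rfl h⟩
    | succ t ih =>
        intro x hx
        by_cases hx0 : x = 0
        · subst hx0
          exact ⟨op_zero_left hop 0, fun h => absurd rfl h⟩
        · -- x ≠ 0
          have hrkx : rk x = x.val := rk_of_ne hx0
          have hxlt : x.val < 2^m := x.isLt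
          have IH : ∀ y : Fin (2^m), rk x < rk y →
              op y 0 = 0 ∧ (y ≠ 0 → ∀ b, rk y < rk (op y b)) := by
            intro y hy
            apply ih
            have := rk_le y
            omega
          -- chain claim
          have claimA : ∀ c, 1 ≤ c →
              (∃ d, 1 ≤ d ∧ d ≤ c ∧ op x ((d:ℕ) : Fin (2^m)) = 0) ∨
              (op x ((c:ℕ) : Fin (2^m)) ≠ 0 ∧ x.val + c ≤ rk (op x ((c:ℕ) : Fin (2^m)))) := by
            intro c hc
            induction c, hc using Nat.le_induction with
            | base =>
                have h1 : op x ((1:ℕ) : Fin (2^m)) = x + 1 := by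
                  rw [Nat.cast_one]; exact hop.2 x
                by_cases hz : x + 1 = 0
                · exact Or.inl ⟨1, le_refl _, le_refl _, by rw [h1, hz]⟩
                · refine Or.inr ⟨by rw [h1]; exact hz, ?_⟩
                  rw [h1, rk_of_ne hz, val_add_one_of_ne hop hz]
            | succ c hc ihc =>
                rcases ihc with ⟨d, hd1, hd2, hd3⟩ | ⟨hne, hge⟩
                · exact Or.inl ⟨d, hd1, le_trans hd2 (Nat.le_succ c), hd3⟩
                · have hrky : rk x < rk (op x ((c:ℕ) : Fin (2^m))) := by
                    rw [hrkx]; omega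
                  have hstep := R_succ hop x c
                  by_cases hz : op x ((c+1:ℕ) : Fin (2^m)) = 0
                  · exact Or.inl ⟨c+1, by omega, le_refl _, hz⟩
                  · refine Or.inr ⟨hz, ?_⟩
                    have := (IH _ hrky).2 hne (x + 1)
                    rw [← hstep] at this
                    omega
          -- existence of zero
          have exZero : ∃ d, 1 ≤ d ∧ d ≤ 2^m - x.val ∧ op x ((d:ℕ) : Fin (2^m)) = 0 := by
            have hc0 : 1 ≤ 2^m - x.val := by omega
            rcases claimA (2^m - x.val) hc0 with ⟨d, h1, h2, h3⟩ | ⟨hne, hge⟩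
            · exact ⟨d, h1, h2, h3⟩
            · exfalso
              have h1 : x.val + (2^m - x.val) = 2^m := by omega
              have h2 := rk_le (op x (((2^m - x.val : ℕ)) : Fin (2^m)))
              have h3 : rk (op x (((2^m - x.val : ℕ)) : Fin (2^m))) = 2^m := by omega
              exact hne (rk_eq_top_iff.mp h3)
          -- minimal period
          have hex : ∃ d, 1 ≤ d ∧ op x ((d:ℕ) : Fin (2^m)) = 0 := by
            obtain ⟨d, h1, _, h3⟩ := exZero
            exact ⟨d, h1, h3⟩
          set p := Nat.find hex with hpdef
          have hpspec := Nat.find_spec hex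
          have hp1 : 1 ≤ p := hpspec.1
          have hpz : op x ((p:ℕ) : Fin (2^m)) = 0 := hpspec.2
          have hpmin : ∀ d, 1 ≤ d → d < p → op x ((d:ℕ) : Fin (2^m)) ≠ 0 := by
            intro d h1 h2 h3
            exact Nat.find_min hex h2 ⟨h1, h3⟩
          -- periodicity
          have periodic : ∀ c, 1 ≤ c → op x ((c + p : ℕ) : Fin (2^m)) = op x ((c:ℕ) : Fin (2^m)) := by
            intro c hc
            induction c, hc using Nat.le_induction with
            | base =>
                have h1 : (1 + p : ℕ) = p + 1 := Nat.add_comm 1 p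
                rw [h1, R_succ hop, hpz, op_zero_left hop]
                rw [Nat.cast_one]
                exact (hop.2 x).symm
            | succ c hc ihc =>
                have h1 : (c + 1 + p : ℕ) = (c + p) + 1 := by omega
                rw [h1, R_succ hop, ihc, ← R_succ hop]
          have periodicN : ∀ q c, 1 ≤ c → op x ((c + q * p : ℕ) : Fin (2^m)) = op x ((c:ℕ) : Fin (2^m)) := by
            intro q
            induction q with
            | zero => intro c hc; norm_num
            | succ q ihq =>
                intro c hc
                have h1 : (c + (q+1) * p : ℕ) = (c + q * p) + p := by ring
                rw [h1, periodic _ (by omega), ihq c hc]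
          -- all row entries: zero or rank above
          have nonzero_rk : ∀ c, 1 ≤ c →
              op x ((c:ℕ) : Fin (2^m)) = 0 ∨ rk x < rk (op x ((c:ℕ) : Fin (2^m))) := by
            intro c hc
            set c' := (c - 1) % p + 1 with hc'def
            have hc'1 : 1 ≤ c' := by omega
            have hc'p : c' ≤ p := by
              have := Nat.mod_lt (c-1) (show 0 < p by omega)
              omega
            have hceq : c = c' + ((c - 1) / p) * p := by
              have h1 := Nat.div_add_mod (c - 1) p
              have h2 : ((c-1)/p) * p = p * ((c-1)/p) := Nat.mul_comm _ _
              omega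
            have hred : op x ((c:ℕ) : Fin (2^m)) = op x ((c':ℕ) : Fin (2^m)) := by
              rw [hceq]; exact periodicN _ _ hc'1
            rw [hred]
            by_cases hcp : c' = p
            · rw [hcp]; exact Or.inl hpz
            · rcases claimA c' hc'1 with ⟨d, h1, h2, h3⟩ | ⟨hne, hge⟩
              · exact absurd h3 (hpmin d h1 (by omega))
              · right; rw [hrkx]; omega
          -- op x 0 = 0
          have hopx0 : op x 0 = 0 := by
            have hxx : x = ((x.val : ℕ) : Fin (2^m)) := (Fin.cast_val_eq_self x).symm
            have hv1 : 1 ≤ x.val :=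
              Nat.pos_of_ne_zero (fun hh => hx0 (Fin.ext (by rw [hh]; rfl)))
            have key : op x 0 = op (op x x) 0 := by
              conv_lhs => rw [← hpz]
              rw [ld hop x x ((p:ℕ) : Fin (2^m)), hpz]
            rcases nonzero_rk x.val hv1 with h | h
            · rw [key]
              rw [← hxx] at h
              rw [h, op_zero_left hop]
            · rw [← hxx] at h
              rw [key]
              exact (IH _ h).1
          refine ⟨hopx0, fun _ b => ?_⟩
          have hbv : op x b = op x ((b.val : ℕ) : Fin (2^m)) := by
            rw [Fin.cast_val_eq_self]
          by_cases hb0 : b.val = 0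
          · have : b = 0 := Fin.ext hb0
            rw [this, hopx0, rk_zero, hrkx]
            exact hxlt
          · rcases nonzero_rk b.val (by omega) with h | h
            · rw [hbv, h, rk_zero, hrkx]; exact hxlt
            · rw [hbv]; exact h
  intro x
  exact main (2^m) x (Nat.sub_le _ _)

end Basic2
section PeriodTheory
variable (hop : IsCyclicLD m op)
include hop

lemma op_zero_right (x : Fin (2^m)) : op x 0 = 0 := (good_all hop x).1

lemma rk_op_gt {x : Fin (2^m)} (hx : x ≠ 0) (b : Fin (2^m)) : rk x < rk (op x b) :=
  (good_all hop x).2 hx b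

lemma cast_pow_eq_zero : ((2^m : ℕ) : Fin (2^m)) = 0 := by
  ext; simp [Fin.val_natCast]

lemma row_chain {x : Fin (2^m)} (hx : x ≠ 0) : ∀ c, 1 ≤ c →
    (∃ d, 1 ≤ d ∧ d ≤ c ∧ op x ((d:ℕ) : Fin (2^m)) = 0) ∨
    (op x ((c:ℕ) : Fin (2^m)) ≠ 0 ∧ x.val + c ≤ rk (op x ((c:ℕ) : Fin (2^m)))) := by
  intro c hc
  induction c, hc using Nat.le_induction with
  | base =>
      have h1 : op x ((1:ℕ) : Fin (2^m)) = x + 1 := by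
        rw [Nat.cast_one]; exact hop.2 x
      by_cases hz : x + 1 = 0
      · exact Or.inl ⟨1, le_refl _, le_refl _, by rw [h1, hz]⟩
      · refine Or.inr ⟨by rw [h1]; exact hz, ?_⟩
        rw [h1, rk_of_ne hz, val_add_one_of_ne hop hz]
  | succ c hc ihc =>
      rcases ihc with ⟨d, hd1, hd2, hd3⟩ | ⟨hne, hge⟩
      · exact Or.inl ⟨d, hd1, le_trans hd2 (Nat.le_succ c), hd3⟩
      · have hstep := R_succ hop x c
        by_cases hz : op x ((c+1:ℕ) : Fin (2^m)) = 0
        · exact Or.inl ⟨c+1, by omega, le_refl _, hz⟩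
        · refine Or.inr ⟨hz, ?_⟩
          have := rk_op_gt hop hne (x + 1)
          rw [← hstep] at this
          omega

lemma exists_row_zero {x : Fin (2^m)} (hx : x ≠ 0) :
    ∃ d, 1 ≤ d ∧ d ≤ 2^m - x.val ∧ op x ((d:ℕ) : Fin (2^m)) = 0 := by
  have hxlt : x.val < 2^m := x.isLt
  have hv : 0 < x.val := Nat.pos_of_ne_zero (fun hh => hx (Fin.ext (by rw [hh]; rfl)))
  have hc0 : 1 ≤ 2^m - x.val := by omega
  rcases row_chain hop hx (2^m - x.val) hc0 with ⟨d, h1, h2, h3⟩ | ⟨hne, hge⟩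
  · exact ⟨d, h1, h2, h3⟩
  · exfalso
    have h2 := rk_le (op x (((2^m - x.val : ℕ)) : Fin (2^m)))
    have h3 : rk (op x (((2^m - x.val : ℕ)) : Fin (2^m))) = 2^m := by omega
    exact hne (rk_eq_top_iff.mp h3)

lemma period_set_nonempty (x : Fin (2^m)) :
    {p : ℕ | 0 < p ∧ op x ((p:ℕ) : Fin (2^m)) = 0}.Nonempty := by
  by_cases hx : x = 0
  · refine ⟨2^m, pow_pos (by norm_num) m, ?_⟩
    rw [hx, op_zero_left hop, cast_pow_eq_zero hop]
  · obtain ⟨d, h1, _, h3⟩ := exists_row_zero hop hx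
    exact ⟨d, h1, h3⟩

lemma period_pos (x : Fin (2^m)) : 0 < period m op x :=
  (Nat.sInf_mem (period_set_nonempty hop x)).1

lemma period_zero_val (x : Fin (2^m)) : op x ((period m op x : ℕ) : Fin (2^m)) = 0 :=
  (Nat.sInf_mem (period_set_nonempty hop x)).2

lemma period_min {x : Fin (2^m)} {d : ℕ} (h1 : 0 < d) (h2 : d < period m op x) :
    op x ((d:ℕ) : Fin (2^m)) ≠ 0 := by
  intro hz
  have hmem : d ∈ {p : ℕ | 0 < p ∧ op x ((p:ℕ) : Fin (2^m)) = 0} := ⟨h1, hz⟩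
  have hle : period m op x ≤ d := Nat.sInf_le hmem
  omega

lemma period_le {x : Fin (2^m)} (hx : x ≠ 0) : period m op x ≤ 2^m - x.val := by
  obtain ⟨d, h1, h2, h3⟩ := exists_row_zero hop hx
  exact le_trans (Nat.sInf_le ⟨h1, h3⟩) h2

lemma row_periodic (x : Fin (2^m)) : ∀ c, 1 ≤ c →
    op x ((c + period m op x : ℕ) : Fin (2^m)) = op x ((c:ℕ) : Fin (2^m)) := by
  intro c hc
  induction c, hc using Nat.le_induction with
  | base =>
      have h1 : (1 + period m op x : ℕ) = period m op x + 1 := Nat.add_comm _ _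
      rw [h1, R_succ hop, period_zero_val hop, op_zero_left hop]
      rw [Nat.cast_one]
      exact (hop.2 x).symm
  | succ c hc ihc =>
      have h1 : (c + 1 + period m op x : ℕ) = (c + period m op x) + 1 := by omega
      rw [h1, R_succ hop, ihc, ← R_succ hop]

lemma row_periodicN (x : Fin (2^m)) : ∀ q c, 1 ≤ c →
    op x ((c + q * period m op x : ℕ) : Fin (2^m)) = op x ((c:ℕ) : Fin (2^m)) := by
  intro q
  induction q with
  | zero => intro c hc; norm_num
  | succ q ihq =>
      intro c hc
      have h1 : (c + (q+1) * period m op x : ℕ) = (c + q * period m op x) + period m op x := by ring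
      rw [h1, row_periodic hop _ _ (by omega), ihq c hc]

lemma row_mod (x : Fin (2^m)) (c : ℕ) :
    op x ((c:ℕ) : Fin (2^m)) = op x ((c % period m op x : ℕ) : Fin (2^m)) := by
  set p := period m op x with hp
  have hppos : 0 < p := period_pos hop x
  by_cases hr : c % p = 0
  · rw [hr, Nat.cast_zero, op_zero_right hop]
    rcases Nat.eq_zero_or_pos c with hc0 | hc0
    · rw [hc0, Nat.cast_zero, op_zero_right hop]
    · obtain ⟨q, hq⟩ := Nat.dvd_of_mod_eq_zero hr
      obtain ⟨q', rfl⟩ : ∃ q', q = q' + 1 := by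
        refine ⟨q - 1, ?_⟩
        rcases Nat.eq_zero_or_pos q with h | h
        · exfalso; rw [h] at hq; omega
        · omega
      have hce : c = p + q' * p := by rw [hq]; ring
      rw [hce, row_periodicN hop x q' p hppos]
      exact period_zero_val hop x
  · have h2 : c = c % p + (c / p) * p := by
      have h3 := Nat.div_add_mod c p
      have h4 : (c/p)*p = p*(c/p) := Nat.mul_comm _ _
      omega
    conv_lhs => rw [h2]
    rw [row_periodicN hop x (c/p) (c % p) (Nat.pos_of_ne_zero hr)]

lemma row_zero_iff (x : Fin (2^m)) (c : ℕ) :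
    op x ((c:ℕ) : Fin (2^m)) = 0 ↔ period m op x ∣ c := by
  constructor
  · intro hz
    by_contra hd
    have hr : c % period m op x ≠ 0 := fun h => hd (Nat.dvd_of_mod_eq_zero h)
    have hlt : c % period m op x < period m op x := Nat.mod_lt _ (period_pos hop x)
    rw [row_mod hop] at hz
    exact period_min hop (Nat.pos_of_ne_zero hr) hlt hz
  · intro hd
    obtain ⟨q, rfl⟩ := hd
    rw [row_mod hop, Nat.mul_mod_right, Nat.cast_zero, op_zero_right hop]

lemma period_dvd_pow (x : Fin (2^m)) : period m op x ∣ 2^m := by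
  rw [← row_zero_iff hop]
  rw [cast_pow_eq_zero hop, op_zero_right hop]

end PeriodTheory
/-- class map to the quotient level -/
def classF (x : Fin (2^m)) : Fin (2^(m-1)) :=
  ⟨x.val % 2^(m-1), Nat.mod_lt _ (pow_pos (by norm_num) _)⟩

/-- canonical (high/corner) lift -/
def liftH (v : Fin (2^(m-1))) : Fin (2^m) :=
  if v.val = 0 then 0 else ((2^(m-1) + v.val : ℕ) : Fin (2^m))

lemma two_pow_sub_add (hm : 1 ≤ m) : 2^(m-1) + 2^(m-1) = 2^m := by
  have h : m - 1 + 1 = m := Nat.sub_add_cancel hm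
  calc 2^(m-1) + 2^(m-1) = 2^(m-1) * 2 := by ring
  _ = 2^(m-1+1) := by rw [pow_succ]
  _ = 2^m := by rw [h]

lemma two_pow_sub_dvd : (2:ℕ)^(m-1) ∣ 2^m := pow_dvd_pow 2 (Nat.sub_le m 1)

lemma classF_val (x : Fin (2^m)) : (classF x).val = x.val % 2^(m-1) := rfl

lemma classF_cast (c : ℕ) : classF ((c : ℕ) : Fin (2^m)) = ((c : ℕ) : Fin (2^(m-1))) := by
  ext
  rw [classF_val]
  rw [Fin.val_natCast, Fin.val_natCast]
  exact Nat.mod_mod_of_dvd c two_pow_sub_dvd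

lemma classF_zero : classF (0 : Fin (2^m)) = 0 := by
  ext; rw [classF_val]; simp

lemma liftH_zero : liftH (0 : Fin (2^(m-1))) = 0 := by
  unfold liftH; simp

lemma liftH_val (hm : 1 ≤ m) {v : Fin (2^(m-1))} (hv : v ≠ 0) :
    (liftH v).val = 2^(m-1) + v.val := by
  have hv' : v.val ≠ 0 := fun h => hv (Fin.ext h)
  unfold liftH
  rw [if_neg hv']
  rw [Fin.val_natCast]
  apply Nat.mod_eq_of_lt
  have := v.isLt
  have := two_pow_sub_add (m := m) hm
  omega

lemma liftH_ne_zero (hm : 1 ≤ m) {v : Fin (2^(m-1))} (hv : v ≠ 0) : liftH v ≠ 0 := by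
  intro h
  have := liftH_val hm hv
  rw [h] at this
  have hp : 0 < (2:ℕ)^(m-1) := pow_pos (by norm_num) _
  simp at this
  omega

lemma liftH_eq_zero_iff (hm : 1 ≤ m) {v : Fin (2^(m-1))} : liftH v = 0 ↔ v = 0 := by
  constructor
  · intro h; by_contra hv; exact liftH_ne_zero hm hv h
  · intro h; rw [h]; exact liftH_zero

lemma classF_liftH (hm : 1 ≤ m) (v : Fin (2^(m-1))) : classF (liftH v) = v := by
  by_cases hv : v = 0
  · rw [hv, liftH_zero, classF_zero]
  · ext
    rw [classF_val, liftH_val hm hv]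
    have h1 : (2^(m-1) + v.val) % 2^(m-1) = v.val % 2^(m-1) :=
      Nat.add_mod_left _ _
    rw [h1, Nat.mod_eq_of_lt v.isLt]

lemma liftH_val_ge (hm : 1 ≤ m) {v : Fin (2^(m-1))} (hv : v ≠ 0) :
    2^(m-1) < (liftH v).val := by
  rw [liftH_val hm hv]
  have : v.val ≠ 0 := fun h => hv (Fin.ext h)
  omega

section Half
variable (hop : IsCyclicLD m op)
include hop

lemma pow2_dvd_of_le {p j : ℕ} (hdvd : p ∣ 2^m) (hle : p ≤ 2^j) : p ∣ 2^j := by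
  obtain ⟨i, hi, rfl⟩ := (Nat.dvd_prime_pow Nat.prime_two).mp hdvd
  have : i ≤ j := by
    by_contra h
    have : 2^j < 2^i := Nat.pow_lt_pow_right (by norm_num) (by omega)
    omega
  exact pow_dvd_pow 2 this

omit hop in
lemma pow2_dvd_of_le' {p j : ℕ} (hdvd : p ∣ 2^m) (hle : p ≤ 2^j) : p ∣ 2^j := by
  obtain ⟨i, hi, rfl⟩ := (Nat.dvd_prime_pow Nat.prime_two).mp hdvd
  have : i ≤ j := by
    by_contra h
    have : 2^j < 2^i := Nat.pow_lt_pow_right (by norm_num) (by omega)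
    omega
  exact pow_dvd_pow 2 this

lemma period_eq_one_iff {x : Fin (2^m)} : period m op x = 1 ↔ x + 1 = 0 := by
  constructor
  · intro h
    have := period_zero_val hop x
    rw [h, Nat.cast_one, hop.2] at this
    exact this
  · intro h
    have h1 : op x ((1:ℕ) : Fin (2^m)) = 0 := by rw [Nat.cast_one, hop.2, h]
    have h2 : period m op x ∣ 1 := by rw [← row_zero_iff hop]; exact h1
    exact Nat.dvd_one.mp h2

/-- for elements with value ≥ half (or zero), the period divides 2^(m-1) -/
lemma period_dvd_half (hm : 1 ≤ m) {x : Fin (2^m)} (hx : x ≠ 0) (hv : 2^(m-1) < x.val) :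
    period m op x ∣ 2^(m-1) := by
  have h1 := period_le hop hx
  have h2 := two_pow_sub_add (m := m) hm
  exact pow2_dvd_of_le' (period_dvd_pow hop x) (by omega)

/-- reduce a column by multiples of the period -/
lemma col_reduce {y : Fin (2^m)} {q : ℕ} (hq : period m op y ∣ q) (c : ℕ) :
    op y ((q + c : ℕ) : Fin (2^m)) = op y ((c:ℕ) : Fin (2^m)) := by
  obtain ⟨t, rfl⟩ := hq
  rw [row_mod hop y (period m op y * t + c), Nat.mul_add_mod, ← row_mod hop]

lemma col_one {y : Fin (2^m)} (hy : y + 1 ≠ 0) {c : ℕ} (hc : c % period m op y = 1) :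
    op y ((c : ℕ) : Fin (2^m)) = y + 1 := by
  rw [row_mod hop, hc, Nat.cast_one, hop.2]


lemma add_one_zero_iff (x : Fin (2^m)) : x + 1 = 0 ↔ x.val = 2^m - 1 := by
  rcases Nat.eq_zero_or_pos m with hm0 | hm0
  · subst hm0
    have h1 : (2:ℕ)^0 = 1 := rfl
    constructor
    · intro _
      have := x.isLt
      omega
    · intro _
      ext
      have h2 := (x + 1).isLt
      have h3 : (0 : Fin (2^0)).val = 0 := rfl
      omega
  · have h2 : 2 ≤ 2^m := by
      calc 2 = 2^1 := (pow_one 2).symm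
      _ ≤ 2^m := Nat.pow_le_pow_right (by norm_num) hm0
    have hadd : (x + 1).val = (x.val + 1) % 2^m := by
      rw [Fin.add_def, Fin.val_one', Nat.mod_eq_of_lt h2]
    constructor
    · intro h
      have hz : (x.val + 1) % 2^m = 0 := by
        rw [← hadd, h]; rfl
      have hd : 2^m ∣ x.val + 1 := Nat.dvd_of_mod_eq_zero hz
      have hle := Nat.le_of_dvd (by omega) hd
      have := x.isLt
      omega
    · intro h
      ext
      rw [hadd, h]
      have h3 : 2^m - 1 + 1 = 2^m := by omega
      rw [h3, Nat.mod_self]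
      rfl

lemma add_one_ne_zero {x : Fin (2^m)} (h : x.val < 2^m - 1) : x + 1 ≠ 0 := by
  intro hh
  have := (add_one_zero_iff hop x).mp hh
  omega

lemma half_chain (hm : 1 ≤ m) : ∀ c, 1 ≤ c → c ≤ 2^(m-1) →
    op (((2^(m-1) : ℕ)) : Fin (2^m)) ((c:ℕ) : Fin (2^m)) = ((2^(m-1) + c : ℕ) : Fin (2^m)) := by
  have hNN := two_pow_sub_add (m := m) hm
  intro c hc
  induction c, hc using Nat.le_induction with
  | base =>
      intro _
      rw [Nat.cast_one, hop.2, Nat.cast_add, Nat.cast_one]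
  | succ c hc ihc =>
      intro hcs
      have hcople : c ≤ 2^(m-1) := by omega
      have ihc' := ihc hcople
      rw [R_succ hop, ihc']
      set y := ((2^(m-1) + c : ℕ) : Fin (2^m)) with hy
      have hyval : y.val = 2^(m-1) + c := by
        rw [hy, Fin.val_natCast]
        exact Nat.mod_eq_of_lt (by omega)
      have hy0 : y ≠ 0 := by
        intro h
        rw [h] at hyval
        simp at hyval
        omega
      have hcol : (((2^(m-1) : ℕ) : Fin (2^m)) + 1) = ((2^(m-1) + 1 : ℕ) : Fin (2^m)) := by
        rw [Nat.cast_add, Nat.cast_one]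
      simp only [hcol]
      by_cases hclast : c = 2^(m-1) - 1
      · -- y is the top element, period 1
        have hy1 : y + 1 = 0 := by
          rw [add_one_zero_iff hop]
          rw [hyval, hclast]
          omega
        have hp1 : period m op y = 1 := (period_eq_one_iff hop).mpr hy1
        have hz : op y ((2^(m-1) + 1 : ℕ) : Fin (2^m)) = 0 := by
          rw [row_zero_iff hop, hp1]
          exact Nat.one_dvd _
        rw [hz]
        have hcc : (2^(m-1) + (c + 1) : ℕ) = 2^m := by omega
        rw [hcc]
        exact (cast_pow_eq_zero hop).symm
      · have hy1 : y + 1 ≠ 0 := by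
          apply add_one_ne_zero hop
          rw [hyval]
          omega
        have hpdvd : period m op y ∣ 2^(m-1) := by
          apply period_dvd_half hop hm hy0
          rw [hyval]; omega
        have hp2 : period m op y ≠ 1 := fun h => hy1 ((period_eq_one_iff hop).mp h)
        have hmod : (2^(m-1) + 1) % period m op y = 1 := by
          obtain ⟨t, ht⟩ := hpdvd
          rw [ht, Nat.mul_add_mod]
          apply Nat.mod_eq_of_lt
          have := period_pos hop y
          omega
        rw [col_one hop hy1 hmod]
        ext
        rw [val_add_one_of_ne hop hy1, hyval, Fin.val_natCast]
        rw [Nat.mod_eq_of_lt (by omega)]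
        omega
end Half

lemma fin_add_one_zero_iff {μ : ℕ} (x : Fin (2^μ)) : x + 1 = 0 ↔ x.val = 2^μ - 1 := by
  rcases Nat.eq_zero_or_pos μ with hm0 | hm0
  · subst hm0
    have h1 : (2:ℕ)^0 = 1 := rfl
    constructor
    · intro _
      have := x.isLt
      omega
    · intro _
      ext
      have h2 := (x + 1).isLt
      have h3 : (0 : Fin (2^0)).val = 0 := rfl
      omega
  · have h2 : 2 ≤ 2^μ := by
      calc 2 = 2^1 := (pow_one 2).symm
      _ ≤ 2^μ := Nat.pow_le_pow_right (by norm_num) hm0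
    have hadd : (x + 1).val = (x.val + 1) % 2^μ := by
      rw [Fin.add_def, Fin.val_one', Nat.mod_eq_of_lt h2]
    constructor
    · intro h
      have hz : (x.val + 1) % 2^μ = 0 := by
        rw [← hadd, h]; rfl
      have hd : 2^μ ∣ x.val + 1 := Nat.dvd_of_mod_eq_zero hz
      have hle := Nat.le_of_dvd (by omega) hd
      have := x.isLt
      omega
    · intro h
      ext
      rw [hadd, h]
      have h3 : 2^μ - 1 + 1 = 2^μ := by omega
      rw [h3, Nat.mod_self]
      rfl

lemma fin_val_add_one {μ : ℕ} {x : Fin (2^μ)} (h : x + 1 ≠ 0) : (x + 1).val = x.val + 1 := by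
  have hv : x.val ≠ 2^μ - 1 := fun hh => h ((fin_add_one_zero_iff x).mpr hh)
  have hm0 : 0 < μ := by
    by_contra hc
    have : μ = 0 := by omega
    subst this
    have := x.isLt
    have h1 : (2:ℕ)^0 = 1 := rfl
    omega
  have h2 : 2 ≤ 2^μ := by
    calc 2 = 2^1 := (pow_one 2).symm
    _ ≤ 2^μ := Nat.pow_le_pow_right (by norm_num) hm0
  rw [Fin.add_def, Fin.val_one', Nat.mod_eq_of_lt h2]
  apply Nat.mod_eq_of_lt
  have := x.isLt
  omega

lemma classF_add_one (hm2 : 2 ≤ m) {x : Fin (2^m)} (h : x + 1 ≠ 0) :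
    classF (x + 1) = classF x + 1 := by
  have h2' : 2 ≤ 2^(m-1) := by
    calc 2 = 2^1 := (pow_one 2).symm
    _ ≤ 2^(m-1) := Nat.pow_le_pow_right (by norm_num) (by omega)
  have hL : (classF (x+1)).val = (x.val + 1) % 2^(m-1) := by
    rw [classF_val, fin_val_add_one h]
  have hR : (classF x + 1).val = (x.val % 2^(m-1) + 1) % 2^(m-1) := by
    rw [Fin.add_def, classF_val, Fin.val_one', Nat.one_mod_eq_one.mpr (by omega)]
  ext
  rw [hL, hR]
  conv_lhs => rw [Nat.add_mod]
  rw [Nat.one_mod_eq_one.mpr (by omega)]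


lemma liftH_one (hm2 : 2 ≤ m) : liftH (1 : Fin (2^(m-1))) = ((2^(m-1) + 1 : ℕ) : Fin (2^m)) := by
  have h2' : 2 ≤ 2^(m-1) := by
    calc 2 = 2^1 := (pow_one 2).symm
    _ ≤ 2^(m-1) := Nat.pow_le_pow_right (by norm_num) (by omega)
  have hv : (1 : Fin (2^(m-1))).val = 1 := by
    rw [Fin.val_one']; exact Nat.mod_eq_of_lt (by omega)
  unfold liftH
  rw [hv]
  norm_num

section HalfQuot
variable (hop : IsCyclicLD m op)
include hop

lemma period_half (hm : 1 ≤ m) : period m op (((2^(m-1) : ℕ)) : Fin (2^m)) = 2^(m-1) := by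
  have hNN := two_pow_sub_add (m := m) hm
  have hz : op (((2^(m-1) : ℕ)) : Fin (2^m)) ((2^(m-1) : ℕ) : Fin (2^m)) = 0 := by
    rw [half_chain hop hm (2^(m-1)) (pow_pos (by norm_num : (0:ℕ) < 2) _) (le_refl _)]
    have : (2^(m-1) + 2^(m-1) : ℕ) = 2^m := hNN
    rw [this]
    exact cast_pow_eq_zero hop
  have hdvd : period m op (((2^(m-1) : ℕ)) : Fin (2^m)) ∣ 2^(m-1) :=
    (row_zero_iff hop _ _).mp hz
  by_contra hne
  have hlt : period m op (((2^(m-1) : ℕ)) : Fin (2^m)) < 2^(m-1) :=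
    lt_of_le_of_ne (Nat.le_of_dvd (pow_pos (by norm_num) _) hdvd) hne
  set p := period m op (((2^(m-1) : ℕ)) : Fin (2^m)) with hp
  have hppos : 0 < p := period_pos hop _
  have := half_chain hop hm p hppos (le_of_lt hlt)
  rw [period_zero_val hop] at this
  have hval : ((2^(m-1) + p : ℕ) : Fin (2^m)).val = 2^(m-1) + p := by
    rw [Fin.val_natCast]
    exact Nat.mod_eq_of_lt (by omega)
  rw [← this] at hval
  simp at hval
  omega

lemma halfrow_formula (hm : 1 ≤ m) (y : Fin (2^m)) :
    op (((2^(m-1) : ℕ)) : Fin (2^m)) y = liftH (classF y) := by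
  have hNN := two_pow_sub_add (m := m) hm
  have hyc : y = ((y.val : ℕ) : Fin (2^m)) := (Fin.cast_val_eq_self y).symm
  conv_lhs => rw [hyc]
  rw [row_mod hop, period_half hop hm]
  set r := y.val % 2^(m-1) with hr
  have hrlt : r < 2^(m-1) := Nat.mod_lt _ (pow_pos (by norm_num) _)
  by_cases hr0 : r = 0
  · rw [hr0, Nat.cast_zero, op_zero_right hop]
    have : classF y = 0 := by
      ext; rw [classF_val]; rw [← hr, hr0]; rfl
    rw [this, liftH_zero]
  · rw [half_chain hop hm r (Nat.pos_of_ne_zero hr0) (le_of_lt hrlt)]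
    have hcF : (classF y).val = r := by rw [classF_val]
    have hcF0 : classF y ≠ 0 := by
      intro h; rw [h] at hcF; exact hr0 hcF.symm
    unfold liftH
    rw [hcF, if_neg hr0]

/-- the quotient operation -/
def qop (op : Fin (2^m) → Fin (2^m) → Fin (2^m)) :
    Fin (2^(m-1)) → Fin (2^(m-1)) → Fin (2^(m-1)) :=
  fun a b => classF (op (liftH a) (liftH b))

lemma quot_eq (hm : 1 ≤ m) (x y : Fin (2^m)) :
    liftH (classF (op x y)) = op (liftH (classF x)) (liftH (classF y)) := by
  rw [← halfrow_formula hop hm, ← halfrow_formula hop hm, ← halfrow_formula hop hm]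
  exact ld hop _ x y

lemma hom_classF (hm : 1 ≤ m) (x y : Fin (2^m)) :
    classF (op x y) = qop op (classF x) (classF y) := by
  unfold qop
  rw [← quot_eq hop hm, classF_liftH hm]

lemma qop_isCLD (hm : 1 ≤ m) : IsCyclicLD (m-1) (qop op) := by
  constructor
  · intro a b c
    have h1 : qop op b c = classF (op (liftH b) (liftH c)) := rfl
    have h2 : a = classF (liftH a) := (classF_liftH hm a).symm
    calc qop op a (qop op b c)
        = qop op (classF (liftH a)) (classF (op (liftH b) (liftH c))) := by rw [← h2, ← h1]
      _ = classF (op (liftH a) (op (liftH b) (liftH c))) := (hom_classF hop hm _ _).symm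
      _ = classF (op (op (liftH a) (liftH b)) (op (liftH a) (liftH c))) := by rw [ld hop]
      _ = qop op (classF (op (liftH a) (liftH b))) (classF (op (liftH a) (liftH c))) :=
          hom_classF hop hm _ _
      _ = qop op (qop op a b) (qop op a c) := rfl
  · intro a
    rcases Nat.lt_or_ge m 2 with hm2 | hm2
    · -- m = 1 : Fin (2^0) is a subsingleton
      haveI : Subsingleton (Fin (2^(m-1))) := by
        have : m - 1 = 0 := by omega
        rw [this, pow_zero]
        infer_instance
      exact Subsingleton.elim _ _
    · have hone : classF (1 : Fin (2^m)) = (1 : Fin (2^(m-1))) := by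
        ext
        rw [classF_val, Fin.val_one', Fin.val_one']
        have h2 : 2 ≤ 2^m := by
          calc 2 = 2^1 := (pow_one 2).symm
          _ ≤ 2^m := Nat.pow_le_pow_right (by norm_num) (by omega)
        have h2' : 2 ≤ 2^(m-1) := by
          calc 2 = 2^1 := (pow_one 2).symm
          _ ≤ 2^(m-1) := Nat.pow_le_pow_right (by norm_num) (by omega)
        rw [Nat.mod_eq_of_lt h2, Nat.mod_eq_of_lt h2']
      -- main computation
      set A := liftH a with hA
      by_cases ha0 : a = 0
      · subst ha0
        rw [liftH_zero] at hA
        have hl1 : liftH (1 : Fin (2^(m-1))) = (((2^(m-1) + 1 : ℕ)) : Fin (2^m)) := liftH_one hm2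
        show classF (op (liftH 0) (liftH 1)) = 0 + 1
        rw [liftH_zero, hl1, op_zero_left hop, classF_cast]
        have h0 : (0 : Fin (2^(m-1))) + 1 = 1 := zero_add _
        rw [h0]
        ext
        rw [Fin.val_natCast, Fin.val_one', Nat.add_mod_left]
      · have hm : 1 ≤ m := by omega
        have hNN := two_pow_sub_add (m := m) hm
        have hA0 : A ≠ 0 := liftH_ne_zero hm ha0
        have hAval : A.val = 2^(m-1) + a.val := liftH_val hm ha0
        have hav0 : 0 < a.val := Nat.pos_of_ne_zero (fun hh => ha0 (Fin.ext hh))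
        have hl1 : liftH (1 : Fin (2^(m-1))) = (((2^(m-1) + 1 : ℕ)) : Fin (2^m)) := liftH_one hm2
        show classF (op A (liftH 1)) = a + 1
        rw [hl1]
        by_cases hA1 : A + 1 = 0
        · -- A is the top element
          have hp1 : period m op A = 1 := (period_eq_one_iff hop).mpr hA1
          have hz : op A ((2^(m-1) + 1 : ℕ) : Fin (2^m)) = 0 := by
            rw [row_zero_iff hop, hp1]
            exact Nat.one_dvd _
          rw [hz, classF_zero]
          have hAv : A.val = 2^m - 1 := (fin_add_one_zero_iff A).mp hA1
          have hav : a.val = 2^(m-1) - 1 := by omega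
          exact ((fin_add_one_zero_iff a).mpr hav).symm
        · have hpdvd : period m op A ∣ 2^(m-1) :=
            period_dvd_half hop hm hA0 (by omega)
          have hp2 : period m op A ≠ 1 := fun h => hA1 ((period_eq_one_iff hop).mp h)
          have hmod : (2^(m-1) + 1) % period m op A = 1 := by
            obtain ⟨t, ht⟩ := hpdvd
            rw [ht, Nat.mul_add_mod]
            apply Nat.mod_eq_of_lt
            have := period_pos hop A
            omega
          rw [col_one hop hA1 hmod, classF_add_one hm2 hA1, classF_liftH hm]

end HalfQuot

section HighRow
variable (hop : IsCyclicLD m op)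
include hop

omit hop in
lemma liftH_classF_self (hm : 1 ≤ m) {x : Fin (2^m)} (hv : 2^(m-1) < x.val) :
    liftH (classF x) = x := by
  have hNN := two_pow_sub_add (m := m) hm
  have hxl := x.isLt
  have hmod : x.val % 2^(m-1) = x.val - 2^(m-1) := by
    rw [Nat.mod_eq_sub_mod (le_of_lt hv)]
    exact Nat.mod_eq_of_lt (by omega)
  have hcl : (classF x).val = x.val - 2^(m-1) := by rw [classF_val, hmod]
  have hne : classF x ≠ 0 := by
    intro h
    rw [h] at hcl
    have : (0 : Fin (2^(m-1))).val = 0 := rfl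
    omega
  ext
  rw [liftH_val hm hne, hcl]
  omega

lemma period_of_zero : period m op 0 = 2^m := by
  apply le_antisymm
  · apply Nat.sInf_le
    refine ⟨pow_pos (by norm_num) _, ?_⟩
    rw [op_zero_left hop, cast_pow_eq_zero hop]
  · have h1 := period_zero_val hop 0
    rw [op_zero_left hop] at h1
    have h2 : 2^m ∣ period m op 0 := by
      have := Fin.val_natCast (period m op 0) (2^m)
      rw [h1] at this
      exact Nat.dvd_of_mod_eq_zero (by
        have h0 : (0 : Fin (2^m)).val = 0 := rfl
        omega)
    exact Nat.le_of_dvd (period_pos hop 0) h2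

lemma highrow (hm : 1 ≤ m) {x : Fin (2^m)} (hv : 2^(m-1) < x.val) (z : Fin (2^m)) :
    op x z = liftH (qop op (classF x) (classF z)) := by
  have hNN := two_pow_sub_add (m := m) hm
  have hx0 : x ≠ 0 := by
    intro h; rw [h] at hv; simp at hv
  have hp : period m op x ∣ 2^(m-1) := period_dvd_half hop hm hx0 hv
  set L := liftH (classF z) with hL
  -- op x z = op x L
  have hcong : z.val % period m op x = L.val % period m op x := by
    have h1 : z.val % 2^(m-1) = L.val % 2^(m-1) := by
      have := classF_liftH (m := m) hm (classF z)
      have h2 : (classF L).val = (classF z).val := by rw [hL, this]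
      rw [classF_val] at h2
      exact h2.symm
    obtain ⟨t, ht⟩ := hp
    calc z.val % period m op x = (z.val % 2^(m-1)) % period m op x := by
          rw [Nat.mod_mod_of_dvd _ ⟨t, ht⟩]
      _ = (L.val % 2^(m-1)) % period m op x := by rw [h1]
      _ = L.val % period m op x := by rw [Nat.mod_mod_of_dvd _ ⟨t, ht⟩]
  have hxz : op x z = op x L := by
    have h1 : op x z = op x ((z.val : ℕ) : Fin (2^m)) := by rw [Fin.cast_val_eq_self]
    have h2 : op x L = op x ((L.val : ℕ) : Fin (2^m)) := by rw [Fin.cast_val_eq_self]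
    rw [h1, h2, row_mod hop, hcong, ← row_mod hop]
  rw [hxz]
  -- op x L = liftH (classF (op x L))
  have hq := quot_eq hop hm x L
  rw [liftH_classF_self hm hv, classF_liftH hm, ← hL] at hq
  rw [← hq]
  congr 1
  rw [hom_classF hop hm, classF_liftH hm]

/-- cast compatibility for quotient rows -/
lemma qop_row (hm : 1 ≤ m) (x : Fin (2^m)) (c : ℕ) :
    classF (op x ((c:ℕ) : Fin (2^m))) = qop op (classF x) ((c:ℕ) : Fin (2^(m-1))) := by
  rw [hom_classF hop hm, classF_cast]

lemma period_quot_dvd (hm : 1 ≤ m) (x : Fin (2^m)) :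
    period (m-1) (qop op) (classF x) ∣ period m op x := by
  rw [← row_zero_iff (qop_isCLD hop hm)]
  rw [← qop_row hop hm]
  rw [period_zero_val hop x, classF_zero]

lemma period_high_eq (hm : 1 ≤ m) {x : Fin (2^m)} (hv : 2^(m-1) ≤ x.val) :
    period m op x = period (m-1) (qop op) (classF x) := by
  rcases eq_or_lt_of_le hv with heq | hlt
  · -- x is exactly the half element
    have hx : x = (((2^(m-1) : ℕ)) : Fin (2^m)) := by
      ext
      rw [Fin.val_natCast, Nat.mod_eq_of_lt]
      · exact heq.symm
      · have := two_pow_sub_add (m := m) hm; omega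
    have hcl : classF x = 0 := by
      ext
      rw [classF_val, ← heq, Nat.mod_self]
      rfl
    rw [hcl, hx, period_half hop hm, period_of_zero (qop_isCLD hop hm)]
  · -- strictly high
    have hsets : {p : ℕ | 0 < p ∧ op x ((p:ℕ) : Fin (2^m)) = 0} =
        {p : ℕ | 0 < p ∧ qop op (classF x) ((p:ℕ) : Fin (2^(m-1))) = 0} := by
      ext c
      simp only [Set.mem_setOf_eq]
      constructor
      · rintro ⟨hc, hz⟩
        refine ⟨hc, ?_⟩
        rw [← qop_row hop hm, hz, classF_zero]
      · rintro ⟨hc, hz⟩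
        refine ⟨hc, ?_⟩
        have h1 := highrow hop hm hlt ((c:ℕ) : Fin (2^m))
        rw [classF_cast, hz, liftH_zero] at h1
        exact h1
    unfold period
    rw [hsets]

lemma period_dich (hm : 1 ≤ m) {x : Fin (2^m)} (hx : x ≠ 0) :
    period m op x ∣ 2 * period (m-1) (qop op) (classF x) := by
  have hNN := two_pow_sub_add (m := m) hm
  rcases le_or_gt (2^(m-1)) x.val with hv | hv
  · rw [period_high_eq hop hm hv]
    exact Dvd.dvd.mul_left (dvd_refl _) 2
  · -- low case
    set p' := period (m-1) (qop op) (classF x) with hp'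
    have hq := qop_isCLD hop hm
    have hcfx : (classF x).val = x.val := by
      rw [classF_val, Nat.mod_eq_of_lt hv]
    have hcf0 : classF x ≠ 0 := by
      intro h
      apply hx
      ext
      rw [h] at hcfx
      have : (0 : Fin (2^(m-1))).val = 0 := rfl
      rw [← hcfx, this]
      rfl
    -- value of R x p' mod half is 0
    have hz' : classF (op x ((p' : ℕ) : Fin (2^m))) = 0 := by
      rw [qop_row hop hm]
      exact period_zero_val hq (classF x)
    by_cases hzz : op x ((p' : ℕ) : Fin (2^m)) = 0
    · -- no doubling
      have : period m op x ∣ p' := (row_zero_iff hop x p').mp hzz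
      exact this.trans (Dvd.dvd.mul_left (dvd_refl _) 2)
    · -- R x p' = half, doubling
      have hhalf : op x ((p' : ℕ) : Fin (2^m)) = (((2^(m-1) : ℕ)) : Fin (2^m)) := by
        have hvv : (op x ((p' : ℕ) : Fin (2^m))).val % 2^(m-1) = 0 := by
          have := congrArg Fin.val hz'
          rw [classF_val] at this
          exact this
        have hlt2 := (op x ((p' : ℕ) : Fin (2^m))).isLt
        have hne0 : (op x ((p' : ℕ) : Fin (2^m))).val ≠ 0 :=
          fun h => hzz (Fin.ext h)
        obtain ⟨t, ht⟩ := Nat.dvd_of_mod_eq_zero hvv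
        have ht1 : t = 1 := by
          have h3 : 2^(m-1) * 2 = 2^m := by omega
          have hlt' : 2^(m-1) * t < 2^(m-1) * 2 := by omega
          have ht2 : t < 2 := lt_of_mul_lt_mul_left hlt' (Nat.zero_le _)
          have ht0 : t ≠ 0 := by
            intro h
            subst h
            simp at ht
            exact hzz ht
          omega
        subst ht1
        ext
        rw [Fin.val_natCast, Nat.mod_eq_of_lt (by omega)]
        omega
      have hx1 : x + 1 ≠ 0 := by
        apply add_one_ne_zero hop
        omega
      have hcl1 : classF (x + 1) = classF x + 1 := by
        rcases le_or_gt 2 m with hm2 | hm2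
        · exact classF_add_one hm2 hx1
        · exfalso
          have : m = 1 := by omega
          subst this
          have : x.val < 1 := by simpa using hv
          exact hx (Fin.ext (by omega))
      -- the lifted second half
      have key : ∀ c, 1 ≤ c → c ≤ p' →
          op x ((p' + c : ℕ) : Fin (2^m)) =
            liftH (qop op (classF x) ((c:ℕ) : Fin (2^(m-1)))) := by
        intro c hc
        induction c, hc using Nat.le_induction with
        | base =>
            intro _
            rw [R_succ hop, hhalf, halfrow_formula hop hm]
            congr 1
            rw [hcl1]
            have : qop op (classF x) ((1:ℕ) : Fin (2^(m-1))) = classF x + 1 := by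
              rw [Nat.cast_one]
              exact hq.2 (classF x)
            rw [this]
        | succ c hc ihc =>
            intro hcs
            have ihc' := ihc (by omega)
            have hnat : (p' + (c+1) : ℕ) = (p' + c) + 1 := by ring
            rw [hnat, R_succ hop, ihc']
            have hRc0 : qop op (classF x) ((c:ℕ) : Fin (2^(m-1))) ≠ 0 := by
              intro h
              have := (row_zero_iff hq (classF x) c).mp h
              have hppos' : 0 < p' := period_pos hq (classF x)
              have := Nat.le_of_dvd (by omega) this
              omega
            have hY : 2^(m-1) < (liftH (qop op (classF x) ((c:ℕ) : Fin (2^(m-1))))).val :=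
              liftH_val_ge hm hRc0
            rw [highrow hop hm hY]
            congr 1
            rw [classF_liftH hm, hcl1]
            have hrec := R_succ hq (classF x) c
            rw [← hrec]

      have h2p : op x ((p' + p' : ℕ) : Fin (2^m)) = 0 := by
        rw [key p' (period_pos hq (classF x)) (le_refl _)]
        rw [period_zero_val hq, liftH_zero]
      have hdvd2 : period m op x ∣ p' + p' := (row_zero_iff hop x _).mp h2p
      have h22 : 2 * p' = p' + p' := by ring
      rw [h22]
      exact hdvd2

end HighRow

lemma pow2_dvd_lt {p a : ℕ} (h : p ∣ 2^a) (hlt : p < 2^a) : p ∣ 2^(a-1) := by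
  obtain ⟨i, hi, rfl⟩ := (Nat.dvd_prime_pow Nat.prime_two).mp h
  have : i ≠ a := by
    intro hh; rw [hh] at hlt; omega
  exact pow_dvd_pow 2 (by omega)

lemma two_le_pow {a : ℕ} (ha : 1 ≤ a) : 2 ≤ 2^a := by
  calc 2 = 2^1 := (pow_one 2).symm
  _ ≤ 2^a := Nat.pow_le_pow_right (by norm_num) ha

lemma pow_lt_pow_of_lt {a b : ℕ} (h : a < b) : (2:ℕ)^a < 2^b :=
  Nat.pow_lt_pow_right (by norm_num) h

/-- the square of the small element 2^(k-1) is divisible by 2^k -/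
theorem halfsq : ∀ m : ℕ, ∀ op : Fin (2^m) → Fin (2^m) → Fin (2^m), IsCyclicLD m op →
    ∀ k, 1 ≤ k → k < m →
    2^k ∣ (op ((2^(k-1) : ℕ) : Fin (2^m)) ((2^(k-1) : ℕ) : Fin (2^m))).val := by
  intro m
  induction m using Nat.strong_induction_on with
  | _ m IH =>
    intro op hop k hk1 hkm
    have hm : 1 ≤ m := by omega
    have hq := qop_isCLD hop hm
    have hcl : classF ((2^(k-1) : ℕ) : Fin (2^m)) = ((2^(k-1) : ℕ) : Fin (2^(m-1))) :=
      classF_cast _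
    have hom := hom_classF hop hm ((2^(k-1) : ℕ) : Fin (2^m)) ((2^(k-1) : ℕ) : Fin (2^m))
    rw [hcl] at hom
    -- value modulo 2^(m-1)
    have hval : (op ((2^(k-1) : ℕ) : Fin (2^m)) ((2^(k-1) : ℕ) : Fin (2^m))).val % 2^(m-1) =
        (qop op ((2^(k-1) : ℕ) : Fin (2^(m-1))) ((2^(k-1) : ℕ) : Fin (2^(m-1)))).val := by
      have := congrArg Fin.val hom
      rw [classF_val] at this
      exact this
    by_cases hkm1 : k = m - 1
    · -- quotient is the half element at level m-1 = k ; square is zero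
      have hm1 : 1 ≤ m - 1 := by omega
      have hz : qop op ((2^(k-1) : ℕ) : Fin (2^(m-1))) ((2^(k-1) : ℕ) : Fin (2^(m-1))) = 0 := by
        have hform := halfrow_formula hq hm1 ((2^(k-1) : ℕ) : Fin (2^(m-1)))
        have hidx : m - 1 - 1 = k - 1 := by omega
        rw [hidx] at hform
        rw [hform]
        have : classF ((2^(k-1) : ℕ) : Fin (2^(m-1))) = ((2^(k-1) : ℕ) : Fin (2^(m-1-1))) :=
          classF_cast _
        rw [this]
        have hz2 : ((2^(k-1) : ℕ) : Fin (2^(m-1-1))) = 0 := by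
          ext
          rw [Fin.val_natCast, hidx]
          rw [Nat.mod_self]
          rfl
        rw [hz2, liftH_zero]
      rw [hz] at hval
      have h0 : (0 : Fin (2^(m-1))).val = 0 := rfl
      rw [h0] at hval
      have hdvd : 2^(m-1) ∣ (op ((2^(k-1) : ℕ) : Fin (2^m)) ((2^(k-1) : ℕ) : Fin (2^m))).val :=
        Nat.dvd_of_mod_eq_zero hval
      have hkk : (2:ℕ)^k = 2^(m-1) := by rw [hkm1]
      rw [hkk]
      exact hdvd
    · -- recurse
      have hrec := IH (m-1) (by omega) (qop op) hq k hk1 (by omega)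
      set V := (op ((2^(k-1) : ℕ) : Fin (2^m)) ((2^(k-1) : ℕ) : Fin (2^m))).val
      have h1 : 2^k ∣ V % 2^(m-1) := by rw [hval]; exact hrec
      have h2 : (2:ℕ)^k ∣ 2^(m-1) := pow_dvd_pow 2 (by omega)
      have h4 : 2^k ∣ 2^(m-1) * (V / 2^(m-1)) := Dvd.dvd.mul_right h2 _
      have h5 : V = 2^(m-1) * (V / 2^(m-1)) + V % 2^(m-1) := (Nat.div_add_mod _ _).symm
      rw [h5]
      exact Nat.dvd_add h4 h1

/-- band elements (within 2^j of the top) with value not divisible by 2^j have period ∣ 2^(j-1) -/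
theorem bandp : ∀ m : ℕ, ∀ op : Fin (2^m) → Fin (2^m) → Fin (2^m), IsCyclicLD m op →
    ∀ j (x : Fin (2^m)), 1 ≤ j → j + 1 ≤ m → 2^m - 2^j < x.val → ¬((2:ℕ)^j ∣ x.val) →
    period m op x ∣ 2^(j-1) := by
  intro m
  induction m using Nat.strong_induction_on with
  | _ m IH =>
    intro op hop j x hj1 hjm hxv hnd
    have hm : 1 ≤ m := by omega
    have hNN := two_pow_sub_add (m := m) hm
    have hq := qop_isCLD hop hm
    have hjpow : (2:ℕ)^j ≤ 2^(m-1) := Nat.pow_le_pow_right (by norm_num) (by omega)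
    have hvhigh : 2^(m-1) ≤ x.val := by omega
    have hPeq := period_high_eq hop hm hvhigh
    have hclval : (classF x).val = x.val - 2^(m-1) := by
      rw [classF_val, Nat.mod_eq_sub_mod hvhigh]
      exact Nat.mod_eq_of_lt (by omega)
    by_cases hjm1 : j + 1 = m
    · -- base : j = m-1
      have hj' : j = m - 1 := by omega
      have hcl0 : classF x ≠ 0 := by
        intro h
        rw [h] at hclval
        have h0 : (0 : Fin (2^(m-1))).val = 0 := rfl
        rw [h0] at hclval
        have : x.val = 2^(m-1) := by omega
        apply hnd
        rw [this, hj']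
      have hle := period_le hq hcl0
      have hdvd := period_dvd_pow hq (classF x)
      have h1 : period (m-1) (qop op) (classF x) < 2^(m-1) := by
        have := val_lt_rk_of_ne (x := classF x) hcl0
        rw [rk_of_ne hcl0] at this
        omega
      have h2 := pow2_dvd_lt hdvd h1
      rw [hPeq]
      have hidx : m - 1 - 1 = j - 1 := by omega
      rw [← hidx]
      exact h2
    · -- recurse
      have hrec : period (m-1) (qop op) (classF x) ∣ 2^(j-1) := by
        apply IH (m-1) (by omega) (qop op) hq j (classF x) hj1 (by omega)
        · rw [hclval]
          have h2j : (2:ℕ)^j ≤ 2^(m-1-1) := Nat.pow_le_pow_right (by norm_num) (by omega)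
          have hNN2 := two_pow_sub_add (m := m-1) (by omega)
          omega
        · rw [hclval]
          intro hd
          apply hnd
          have h1 : (2:ℕ)^j ∣ 2^(m-1) := hjpow |> fun _ => pow_dvd_pow 2 (by omega)
          have h2 : x.val = 2^(m-1) + (x.val - 2^(m-1)) := by omega
          rw [h2]
          exact Nat.dvd_add h1 hd
      rw [hPeq]
      exact hrec

theorem chaind (m : ℕ) (op : Fin (2^m) → Fin (2^m) → Fin (2^m)) (hop : IsCyclicLD m op)
    (j : ℕ) (hj : j + 2 ≤ m) :
    op (((2^(m-1) - 2^j : ℕ)) : Fin (2^m)) ((2^j : ℕ) : Fin (2^m)) =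
      (((2^(m-1) : ℕ)) : Fin (2^m)) := by
  have hm : 1 ≤ m := by omega
  have hNN := two_pow_sub_add (m := m) hm
  have hq := qop_isCLD hop hm
  set xv := 2^(m-1) - 2^j with hxv
  have hjlt : (2:ℕ)^j < 2^(m-1) := pow_lt_pow_of_lt (by omega)
  have hjpos : 0 < (2:ℕ)^j := pow_pos (by norm_num) _
  have hxvlt : xv < 2^m := by omega
  set x := ((xv : ℕ) : Fin (2^m)) with hx
  have hxval : x.val = xv := by
    rw [hx, Fin.val_natCast]; exact Nat.mod_eq_of_lt hxvlt
  have hdvd_xv : (2:ℕ)^j ∣ xv := by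
    have h1 : (2:ℕ)^j ∣ 2^(m-1) := pow_dvd_pow 2 (by omega)
    exact Nat.dvd_sub h1 (dvd_refl _)
  -- the successor cast
  have hx1 : x + 1 = ((xv + 1 : ℕ) : Fin (2^m)) := by
    have hne : x + 1 ≠ 0 := add_one_ne_zero hop (by rw [hxval]; omega)
    ext
    rw [fin_val_add_one hne, hxval, Fin.val_natCast, Nat.mod_eq_of_lt (by omega)]
  have claim : ∀ c, 1 ≤ c → c ≤ 2^j → op x ((c:ℕ) : Fin (2^m)) = ((xv + c : ℕ) : Fin (2^m)) := by
    intro c hc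
    induction c, hc using Nat.le_induction with
    | base =>
        intro _
        rw [Nat.cast_one, hop.2, hx1]
    | succ c hc ihc =>
        intro hcs
        rw [R_succ hop, ihc (by omega), hx1]
        set y := ((xv + c : ℕ) : Fin (2^m)) with hy
        have hyval : y.val = xv + c := by
          rw [hy, Fin.val_natCast]; exact Nat.mod_eq_of_lt (by omega)
        have hy1ne : y + 1 ≠ 0 := add_one_ne_zero hop (by rw [hyval]; omega)
        have hy1 : y + 1 = ((xv + c + 1 : ℕ) : Fin (2^m)) := by
          ext
          rw [fin_val_add_one hy1ne, hyval, Fin.val_natCast, Nat.mod_eq_of_lt (by omega)]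
        have hj1 : 1 ≤ j := by
          by_contra h
          have : j = 0 := by omega
          rw [this] at hcs
          omega
        have heven : (2:ℕ) ∣ xv :=
          dvd_trans (dvd_pow_self 2 (by omega : j ≠ 0)) hdvd_xv
        by_cases hclast : c = 2^j - 1
        · -- y = half - 1, its period is 2
          have hyv2 : y.val = 2^(m-1) - 1 := by omega
          have hy1half : y + 1 = (((2^(m-1) : ℕ)) : Fin (2^m)) := by
            rw [hy1]
            congr 1
            omega
          have hR2 : op y ((2:ℕ) : Fin (2^m)) = 0 := by
            have h2 : ((2:ℕ) : Fin (2^m)) = ((1+1 : ℕ) : Fin (2^m)) := by norm_num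
            rw [h2, R_succ hop, Nat.cast_one, hop.2, hy1half]
            rw [row_zero_iff hop, period_half hop hm]
          have hp2 : period m op y = 2 := by
            have hdvd2 : period m op y ∣ 2 := by rw [← row_zero_iff hop]; exact hR2
            have hne1 : period m op y ≠ 1 := by
              intro h
              have := (period_eq_one_iff hop).mp h
              rw [hy1half] at this
              have hv := congrArg Fin.val this
              rw [Fin.val_natCast, Nat.mod_eq_of_lt (by omega)] at hv
              have h0 : (0 : Fin (2^m)).val = 0 := rfl
              rw [h0] at hv
              omega
            rcases (Nat.dvd_prime Nat.prime_two).mp hdvd2 with h | h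
            · exact absurd h hne1
            · exact h
          have hmod : (xv + 1) % period m op y = 1 := by
            rw [hp2]
            omega
          rw [col_one hop hy1ne hmod, hy1]
          congr 1
        · -- interior band element
          have hy0 : y ≠ 0 := by
            intro h
            have := congrArg Fin.val h
            rw [hyval] at this
            have h0 : (0 : Fin (2^m)).val = 0 := rfl
            rw [h0] at this
            omega
          have hclF : (classF y).val = xv + c := by
            rw [classF_val, hyval]
            exact Nat.mod_eq_of_lt (by omega)
          have hrec : period (m-1) (qop op) (classF y) ∣ 2^(j-1) := by
            apply bandp (m-1) (qop op) hq j (classF y) hj1 (by omega)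
            · rw [hclF]
              have hNN2 := two_pow_sub_add (m := m-1) (by omega)
              omega
            · rw [hclF]
              intro hd
              have hc2 : (2:ℕ)^j ∣ c := by
                have := Nat.dvd_sub hd hdvd_xv
                have he : xv + c - xv = c := by omega
                rw [he] at this
                exact this
              have := Nat.le_of_dvd (by omega) hc2
              omega
          have hpy : period m op y ∣ 2^j := by
            have h1 := period_dich hop hm hy0
            have h2 : 2 * period (m-1) (qop op) (classF y) ∣ 2 * 2^(j-1) :=
              mul_dvd_mul_left 2 hrec
            have h3 : 2 * 2^(j-1) = 2^j := by
              rw [← pow_succ']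
              congr 1
              omega
            rw [h3] at h2
            exact h1.trans h2
          have hmod : (xv + 1) % period m op y = 1 := by
            obtain ⟨t, ht⟩ := hpy.trans hdvd_xv
            have hne1 : period m op y ≠ 1 := fun h => hy1ne ((period_eq_one_iff hop).mp h)
            have hpos := period_pos hop y
            rw [ht, Nat.mul_add_mod]
            exact Nat.mod_eq_of_lt (by omega)
          rw [col_one hop hy1ne hmod, hy1]
          congr 1
  have := claim (2^j) (pow_pos (by norm_num : (0:ℕ) < 2) _) (le_refl _)
  rw [this]
  congr 1
  omega

theorem master : ∀ m : ℕ, ∀ op : Fin (2^m) → Fin (2^m) → Fin (2^m), IsCyclicLD m op →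
    (∀ x : Fin (2^m), 0 < x.val → x.val < 2^(m-1) → ¬ (period m op x ∣ x.val)) ∧
    (∀ x : Fin (2^m), 2^(m-1) ≤ x.val →
      (period m op x ∣ x.val ↔ ∃ j, j < m ∧ x.val = 2^m - 2^j)) := by
  intro m
  induction m using Nat.strong_induction_on with
  | _ m IH =>
    intro op hop
    rcases Nat.lt_or_ge m 2 with hm2 | hm2
    · -- m = 0 or 1
      interval_cases m
      · constructor
        · intro x h1 h2
          exfalso
          have h3 : (2:ℕ)^(0-1) = 1 := rfl
          omega
        · intro x hx
          exfalso
          have h3 : (2:ℕ)^(0-1) = 1 := rfl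
          have h4 : (2:ℕ)^0 = 1 := rfl
          have := x.isLt
          omega
      · constructor
        · intro x h1 h2
          exfalso
          have h3 : (2:ℕ)^(1-1) = 1 := rfl
          omega
        · intro x hx
          have h3 : (2:ℕ)^(1-1) = 1 := rfl
          have h4 : (2:ℕ)^1 = 2 := rfl
          have hxv : x.val = 1 := by
            have := x.isLt
            omega
          apply iff_of_true
          · have hp1 : period 1 op x = 1 := by
              apply (period_eq_one_iff hop).mpr
              apply (fin_add_one_zero_iff x).mpr
              omega
            rw [hp1, hxv]
          · exact ⟨0, by omega, by omega⟩
    · -- m ≥ 2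
      have hm : 1 ≤ m := by omega
      have hNN := two_pow_sub_add (m := m) hm
      have hNN2 := two_pow_sub_add (m := m-1) (by omega)
      have he : m - 1 - 1 = m - 2 := by omega
      have hq := qop_isCLD hop hm
      obtain ⟨IH1, IH2⟩ := IH (m-1) (by omega) (qop op) hq
      -- CHAR for level m
      have hchar : ∀ x : Fin (2^m), 2^(m-1) ≤ x.val →
          (period m op x ∣ x.val ↔ ∃ j, j < m ∧ x.val = 2^m - 2^j) := by
        intro x hv
        rcases eq_or_lt_of_le hv with hveq | hlt
        · apply iff_of_true
          · have hx : x = (((2^(m-1) : ℕ)) : Fin (2^m)) := by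
              ext
              rw [Fin.val_natCast, Nat.mod_eq_of_lt (by omega)]
              exact hveq.symm
            rw [hx, period_half hop hm, Fin.val_natCast, Nat.mod_eq_of_lt (by omega)]
          · exact ⟨m-1, by omega, by omega⟩
        · have hPeq := period_high_eq hop hm (le_of_lt hlt)
          have hclval : (classF x).val = x.val - 2^(m-1) := by
            rw [classF_val, Nat.mod_eq_sub_mod (le_of_lt hlt)]
            have := x.isLt
            exact Nat.mod_eq_of_lt (by omega)
          have hclpos : 0 < (classF x).val := by omega
          have hcllt : (classF x).val < 2^(m-1) := (classF x).isLt
          have hp'half : period (m-1) (qop op) (classF x) ∣ 2^(m-1) :=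
            period_dvd_pow hq (classF x)
          have hiff1 : period m op x ∣ x.val ↔
              period (m-1) (qop op) (classF x) ∣ (classF x).val := by
            rw [hPeq]
            constructor
            · intro h
              have h2 : (classF x).val = x.val - 2^(m-1) := hclval
              have := Nat.dvd_sub h hp'half
              rw [h2]
              exact this
            · intro h
              have h2 : x.val = 2^(m-1) + (classF x).val := by omega
              rw [h2]
              exact Nat.dvd_add hp'half h
          rcases Nat.lt_or_ge (classF x).val (2^(m-1-1)) with hmid | hge
          · apply iff_of_false
            · rw [hiff1]
              exact IH1 (classF x) hclpos hmid
            · rintro ⟨j, hj, hxval⟩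
              have hjne : j ≠ m - 1 := by
                intro h
                rw [h] at hxval
                omega
              have hjle : j ≤ m - 2 := by omega
              have hjpow : (2:ℕ)^j ≤ 2^(m-1-1) := Nat.pow_le_pow_right (by norm_num) (by omega)
              omega
          · rw [hiff1]
            rw [IH2 (classF x) hge]
            constructor
            · rintro ⟨j, hj, hj2⟩
              refine ⟨j, by omega, ?_⟩
              have hjpow : (2:ℕ)^j ≤ 2^(m-1) := Nat.pow_le_pow_right (by norm_num) (by omega)
              omega
            · rintro ⟨j, hj, hj2⟩
              have hjne : j ≠ m - 1 := by
                intro h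
                rw [h] at hj2
                omega
              refine ⟨j, by omega, ?_⟩
              have hjpow : (2:ℕ)^j ≤ 2^(m-1) := Nat.pow_le_pow_right (by norm_num) (by omega)
              omega
      refine ⟨?_, hchar⟩
      -- LEMZ for level m
      intro x hpos hlow hdvd
      have hclval : (classF x).val = x.val := by
        rw [classF_val]
        exact Nat.mod_eq_of_lt hlow
      have hp'p : period (m-1) (qop op) (classF x) ∣ period m op x :=
        period_quot_dvd hop hm x
      have hp'val : period (m-1) (qop op) (classF x) ∣ x.val := hp'p.trans hdvd
      rcases Nat.lt_or_ge x.val (2^(m-1-1)) with hmid | hge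
      · apply IH1 (classF x) (by omega) (by omega)
        rw [hclval]
        exact hp'val
      · have hge' : 2^(m-1-1) ≤ (classF x).val := by omega
        have hch := (IH2 (classF x) hge').mp (by rw [hclval]; exact hp'val)
        obtain ⟨j, hj, hj2⟩ := hch
        rw [hclval] at hj2
        have hjpow : (2:ℕ)^j ≤ 2^(m-1) := Nat.pow_le_pow_right (by norm_num) (by omega)
        have hj2pow : (2:ℕ)^(j+1) ∣ 2^(m-1) := pow_dvd_pow 2 (by omega)
        -- period divides 2^j
        obtain ⟨i, hi, hpi⟩ := (Nat.dvd_prime_pow Nat.prime_two).mp (period_dvd_pow hop x)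
        have hij : i ≤ j := by
          by_contra hij
          have hx2 : 2^(j+1) ∣ x.val := by
            rw [hpi] at hdvd
            exact dvd_trans (pow_dvd_pow 2 (by omega)) hdvd
          have h5 : (2:ℕ)^j = 2^(m-1) - x.val := by omega
          have h6 : (2:ℕ)^(j+1) ∣ 2^j := by
            rw [h5]
            exact Nat.dvd_sub hj2pow hx2
          have h7 := Nat.le_of_dvd (pow_pos (by norm_num) _) h6
          have h8 : (2:ℕ)^j < 2^(j+1) := pow_lt_pow_of_lt (by omega)
          omega
        have hpj : period m op x ∣ 2^j := by
          rw [hpi]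
          exact pow_dvd_pow 2 hij
        have hzero : op x ((2^j : ℕ) : Fin (2^m)) = 0 := (row_zero_iff hop x _).mpr hpj
        have hxeq : x = (((2^(m-1) - 2^j : ℕ)) : Fin (2^m)) := by
          ext
          rw [Fin.val_natCast, Nat.mod_eq_of_lt (by omega)]
          omega
        have hcd := chaind m op hop j (by omega)
        rw [← hxeq] at hcd
        rw [hzero] at hcd
        have := congrArg Fin.val hcd
        rw [Fin.val_natCast, Nat.mod_eq_of_lt (by omega)] at this
        have h0 : (0 : Fin (2^m)).val = 0 := rfl
        rw [h0] at this
        have : (2:ℕ)^(m-1) = 0 := this.symm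
        have := pow_pos (show 0 < 2 by norm_num) (m-1)
        omega

end LaverWork


/-- for `n ≥ 1` and `a < 2^n − 1` with period `p_n(a) = 2^k`, one has
`k ≥ 1`, the set `{c | a *_n c ≥ 2^{n−1}}` is nonempty, and its least element
(the threshold `t_n(a)`) is at most `2^{k−1}`. -/
theorem threshold_exists_le (n : ℕ) (hn : 1 ≤ n) (a : ℕ) (ha : a < 2^n - 1) (k : ℕ)
    (op : Fin (2^n) → Fin (2^n) → Fin (2^n)) (hop : IsCyclicLD n op)
    (hk : period n op ((a : ℕ) : Fin (2^n)) = 2^k) :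
    1 ≤ k ∧
    ∃ t : ℕ, IsLeast {c : ℕ | 2^(n-1) ≤ (op ((a : ℕ) : Fin (2^n)) ((c : ℕ) : Fin (2^n))).val} t ∧
      t ≤ 2^(k-1) := by
  classical
  open LaverWork in
  have hNN := LaverWork.two_pow_sub_add (m := n) hn
  set x := ((a : ℕ) : Fin (2^n)) with hxdef
  have hxval : x.val = a := by
    rw [hxdef, Fin.val_natCast]
    exact Nat.mod_eq_of_lt (by omega)
  have hk1 : 1 ≤ k := by
    by_contra hk0
    have hkz : k = 0 := by omega
    rw [hkz, pow_zero] at hk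
    have := (LaverWork.period_eq_one_iff hop).mp hk
    have hv := (LaverWork.fin_add_one_zero_iff x).mp this
    omega
  refine ⟨hk1, ?_⟩
  have hzS : 2^(n-1) ≤ (op x ((2^(k-1) : ℕ) : Fin (2^n))).val := by
    by_cases ha0 : a = 0
    · -- x = 0 : identity row
      have hx0 : x = 0 := by
        rw [hxdef, ha0]
        norm_num
      have hkn : k = n := by
        have := LaverWork.period_of_zero hop
        rw [← hx0] at this
        rw [hk] at this
        exact Nat.pow_right_injective (le_refl 2) this
      rw [hx0, LaverWork.op_zero_left hop, Fin.val_natCast, hkn]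
      rw [Nat.mod_eq_of_lt (by omega)]
    · have hx0 : x ≠ 0 := by
        intro h
        have := congrArg Fin.val h
        rw [hxval] at this
        exact ha0 this
      have hkn : k < n := by
        have h1 := LaverWork.period_le hop hx0
        rw [hk, hxval] at h1
        have h2 : (2:ℕ)^k < 2^n := by omega
        exact (Nat.pow_lt_pow_iff_right (by norm_num)).mp h2
      set u := ((2^(k-1) : ℕ) : Fin (2^n)) with hu
      have hV : 2^k ∣ (op u u).val := LaverWork.halfsq n op hop k hk1 hkn
      set z := op x u with hz
      have hz0 : z ≠ 0 := by
        intro h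
        have : period n op x ∣ 2^(k-1) := by
          rw [← LaverWork.row_zero_iff hop]
          rw [← hu, ← hz]
          exact h
        rw [hk] at this
        have h1 := Nat.le_of_dvd (pow_pos (by norm_num) _) this
        have h2 : (2:ℕ)^(k-1) < 2^k := LaverWork.pow_lt_pow_of_lt (by omega)
        omega
      have hzz : op z z = 0 := by
        have h1 := LaverWork.ld hop x u u
        have h2 : op x (op u u) = 0 := by
          have h3 : op u u = (((op u u).val : ℕ) : Fin (2^n)) := (Fin.cast_val_eq_self _).symm
          rw [h3, LaverWork.row_zero_iff hop, hk]
          exact hV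
        rw [h2] at h1
        exact h1.symm
      have hdvd : period n op z ∣ z.val := by
        rw [← LaverWork.row_zero_iff hop]
        rw [Fin.cast_val_eq_self]
        exact hzz
      have hzpos : 0 < z.val :=
        Nat.pos_of_ne_zero (fun h => hz0 (Fin.ext (by rw [h]; rfl)))
      by_contra hlt
      exact (LaverWork.master n op hop).1 z hzpos (by omega) hdvd
  refine ⟨sInf {c : ℕ | 2^(n-1) ≤ (op x ((c : ℕ) : Fin (2^n))).val}, ⟨?_, ?_⟩, ?_⟩
  · exact Nat.sInf_mem ⟨2^(k-1), hzS⟩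
  · intro b hb
    exact Nat.sInf_le hb
  · exact Nat.sInf_le hzS
end

section
/- For every natural number n and every a with 1 ≤ a ≤ 2^n, in the cyclic left-distributive algebra A_{n+2} one has 2^n *_{n+2} a = 2^n + a. -/
open Fin.NatCast

namespace CLD

variable {m : ℕ}

/-- auxiliary "value with 0 counted as 2^m" -/
def val' (z : Fin (2^m)) : ℕ := if z = 0 then 2^m else z.val

lemma val'_le (z : Fin (2^m)) : val' z ≤ 2^m := by
  unfold val'; split
  · exact le_rfl
  · exact z.is_lt.le

lemma le_val' (z : Fin (2^m)) : z.val ≤ val' z := by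
  unfold val'; split
  · simp_all
  · exact le_rfl

lemma val'_of_ne (z : Fin (2^m)) (h : z ≠ 0) : val' z = z.val := if_neg h

lemma val'_pos (hm : 0 < m) (z : Fin (2^m)) : 0 < val' z := by
  unfold val'; split
  · positivity
  · rename_i h
    rcases Nat.eq_zero_or_pos z.val with h0 | h0
    · exact absurd (Fin.ext h0) h
    · exact h0

lemma one_lt_N (hm : 0 < m) : 1 < 2^m := by
  calc 1 < 2^1 := by norm_num
  _ ≤ 2^m := Nat.pow_le_pow_right (by norm_num) hm

lemma val_one (hm : 0 < m) : (1 : Fin (2^m)).val = 1 := by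
  have : (1 : Fin (2^m)) = ((1:ℕ) : Fin (2^m)) := by norm_cast
  rw [this, Fin.val_natCast, Nat.mod_eq_of_lt (one_lt_N hm)]

lemma cast_succ_form (y : Fin (2^m)) : ∃ k : ℕ, y = ((k + 1 : ℕ) : Fin (2^m)) := by
  refine ⟨y.val + 2^m - 1, ?_⟩
  have h1 : (1:ℕ) ≤ 2^m := Nat.one_le_two_pow
  have : y.val + 2^m - 1 + 1 = y.val + 2^m := by omega
  rw [this, Nat.cast_add, Fin.natCast_self, add_zero, Fin.cast_val_eq_self]

lemma lt_val'_add_one (x : Fin (2^m)) : x.val < val' (x + 1) := by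
  by_cases h1 : x + 1 = 0
  · rw [val', if_pos h1]; exact x.is_lt
  · rw [val', if_neg h1]
    have hne : (x + 1).val ≠ 0 := fun hh => h1 (Fin.ext (by simpa using hh))
    have hv : (x + 1).val = (x.val + (1 : Fin (2^m)).val) % 2^m := Fin.val_add x 1
    have h1v : (1 : Fin (2^m)).val = 1 % 2^m := by
      have : (1 : Fin (2^m)) = ((1:ℕ) : Fin (2^m)) := by norm_cast
      rw [this, Fin.val_natCast]
    have hr : 1 % 2^m ≤ 1 := Nat.mod_le 1 (2^m)
    interval_cases hh : (1 % 2^m)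
    · exfalso
      have h2 : 2^m = 1 := by
        have := Nat.one_le_two_pow (n := m)
        rcases Nat.lt_or_ge 1 (2^m) with h | h
        · rw [Nat.mod_eq_of_lt h] at hh; omega
        · omega
      apply hne
      rw [hv, h1v]
      simp [h2]
      omega
    · rw [hv, h1v]
      rcases Nat.lt_or_ge (x.val + 1) (2^m) with h | h
      · rw [Nat.mod_eq_of_lt h]; omega
      · exfalso
        have hx2 : x.val + 1 = 2^m := by have := x.is_lt; omega
        apply hne
        rw [hv, h1v, hx2, Nat.mod_self]

section Ops
variable (op : Fin (2^m) → Fin (2^m) → Fin (2^m)) (hop : IsCyclicLD m op)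
include hop

lemma opR (x y : Fin (2^m)) : op x (y + 1) = op (op x y) (x + 1) := by
  have h := hop.1 x y 1
  rwa [hop.2 y, hop.2 x] at h

lemma opZero (y : Fin (2^m)) : op 0 y = y := by
  have key : ∀ k : ℕ, op 0 ((k + 1 : ℕ) : Fin (2^m)) = ((k + 1 : ℕ) : Fin (2^m)) := by
    intro k
    induction k with
    | zero => simpa using hop.2 0
    | succ k ih =>
      have e : ((k + 1 + 1 : ℕ) : Fin (2^m)) = ((k + 1 : ℕ) : Fin (2^m)) + 1 := by push_cast; ring
      rw [e, opR op hop, ih, zero_add, hop.2]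
  obtain ⟨k, rfl⟩ := cast_succ_form y
  exact key k

lemma claimC (x y : Fin (2^m)) : x.val < val' (op x y) := by
  suffices H : ∀ d (x : Fin (2^m)), 2^m - x.val ≤ d →
      ∀ k : ℕ, x.val < val' (op x ((k + 1 : ℕ) : Fin (2^m))) by
    obtain ⟨k, rfl⟩ := cast_succ_form y
    exact H (2^m) x (by omega) k
  intro d
  induction d with
  | zero => intro x hx k; exact absurd x.is_lt (by omega)
  | succ d IH =>
    intro x hx k
    induction k with
    | zero =>
      have e : ((0 + 1 : ℕ) : Fin (2^m)) = 1 := by norm_cast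
      rw [e, hop.2]
      exact lt_val'_add_one x
    | succ k ihk =>
      have e : ((k + 1 + 1 : ℕ) : Fin (2^m)) = ((k + 1 : ℕ) : Fin (2^m)) + 1 := by push_cast; ring
      rw [e, opR op hop]
      set a := op x ((k + 1 : ℕ) : Fin (2^m)) with ha
      by_cases h0 : a = 0
      · rw [h0, opZero op hop]
        exact lt_val'_add_one x
      · have hav : x.val < a.val := by
          have := ihk
          rwa [val'_of_ne a h0] at this
        have hstep : 2^m - a.val ≤ d := by omega
        have := IH a hstep
        have h2 : a.val < val' (op a (x + 1)) := by
          obtain ⟨j, hj⟩ := cast_succ_form (x + 1 : Fin (2^m))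
          rw [hj]; exact IH a hstep j
        omega

lemma opZeroRight (x : Fin (2^m)) : op x 0 = 0 := by
  by_contra h
  have key : op x 0 = op (op x 0) (op x 0) := by
    have := hop.1 x 0 0
    rwa [opZero op hop] at this
  have := claimC op hop (op x 0) (op x 0)
  rw [← key, val'_of_ne _ h] at this
  omega

omit hop in
lemma val_add_one_of_ne (x : Fin (2^m)) (h : x + 1 ≠ 0) : (x + 1).val = x.val + 1 := by
  have h1 := lt_val'_add_one (m := m) x
  rw [val'_of_ne _ h] at h1
  have hv : (x + 1).val = (x.val + (1 : Fin (2^m)).val) % 2^m := Fin.val_add x 1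
  have h1v : (1 : Fin (2^m)).val = 1 % 2^m := by
    have : (1 : Fin (2^m)) = ((1:ℕ) : Fin (2^m)) := by norm_cast
    rw [this, Fin.val_natCast]
  have hr : 1 % 2^m ≤ 1 := Nat.mod_le 1 (2^m)
  have hub : (x + 1).val ≤ x.val + 1 := by
    rw [hv, h1v]
    calc (x.val + 1 % 2^m) % 2^m ≤ x.val + 1 % 2^m := Nat.mod_le _ _
    _ ≤ x.val + 1 := by omega
  omega

lemma opR_cast (x : Fin (2^m)) (j : ℕ) :
    op x ((j + 1 : ℕ) : Fin (2^m)) = op (op x ((j : ℕ) : Fin (2^m))) (x + 1) := by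
  have e : ((j + 1 : ℕ) : Fin (2^m)) = ((j : ℕ) : Fin (2^m)) + 1 := by push_cast; ring
  rw [e, opR op hop]

lemma chain (x : Fin (2^m)) : ∀ t j : ℕ,
    (∀ i, j ≤ i → i < j + t → op x ((i : ℕ) : Fin (2^m)) ≠ 0) →
    (op x ((j : ℕ) : Fin (2^m))).val + t ≤ val' (op x ((j + t : ℕ) : Fin (2^m))) := by
  intro t
  induction t with
  | zero => intro j _; simpa using le_val' _
  | succ t IH =>
    intro j hnz
    have ih := IH j (fun i h1 h2 => hnz i h1 (by omega))
    have ha : op x ((j + t : ℕ) : Fin (2^m)) ≠ 0 := hnz (j + t) (by omega) (by omega)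
    rw [val'_of_ne _ ha] at ih
    have e : (j + (t + 1) : ℕ) = (j + t) + 1 := by ring
    rw [e, opR_cast op hop]
    have := claimC op hop (op x ((j + t : ℕ) : Fin (2^m))) (x + 1)
    omega

lemma perFacts (x : Fin (2^m)) :
    ∃ p : ℕ, 0 < p ∧ p ∣ 2^m ∧ p + x.val ≤ 2^m ∧
      (∀ j : ℕ, op x ((j : ℕ) : Fin (2^m)) = 0 ↔ p ∣ j) ∧
      (∀ j k : ℕ, p ∣ k → op x ((j + k : ℕ) : Fin (2^m)) = op x ((j : ℕ) : Fin (2^m))) := by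
  classical
  have hex : ∃ j, 0 < j ∧ op x ((j : ℕ) : Fin (2^m)) = 0 :=
    ⟨2^m, Nat.pow_pos (by norm_num), by rw [Fin.natCast_self, opZeroRight op hop]⟩
  set p := Nat.find hex with hp
  obtain ⟨hp0, hpz⟩ := Nat.find_spec hex
  have hmin : ∀ j, 0 < j → j < p → op x ((j:ℕ) : Fin (2^m)) ≠ 0 := by
    intro j h1 h2 h3
    exact Nat.find_min hex h2 ⟨h1, h3⟩
  have hper : ∀ j : ℕ, op x ((j + p : ℕ) : Fin (2^m)) = op x ((j:ℕ) : Fin (2^m)) := by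
    intro j
    induction j with
    | zero =>
      rw [zero_add, hpz]
      rw [show ((0:ℕ) : Fin (2^m)) = 0 by norm_cast, opZeroRight op hop]
    | succ j ih =>
      have e : (j + 1 + p : ℕ) = (j + p) + 1 := by ring
      rw [e, opR_cast op hop, ih, ← opR_cast op hop]
  have hmul : ∀ c j : ℕ, op x ((j + c * p : ℕ) : Fin (2^m)) = op x ((j:ℕ) : Fin (2^m)) := by
    intro c
    induction c with
    | zero => simp
    | succ c ih =>
      intro j
      have e : (j + (c+1) * p : ℕ) = (j + c * p) + p := by ring
      rw [e, hper, ih]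
  have hmod : ∀ j : ℕ, op x ((j:ℕ) : Fin (2^m)) = op x ((j % p : ℕ) : Fin (2^m)) := by
    intro j
    conv_lhs => rw [show j = j % p + (j / p) * p by rw [Nat.mod_add_div']]
    rw [hmul]
  have hiff : ∀ j : ℕ, op x ((j:ℕ) : Fin (2^m)) = 0 ↔ p ∣ j := by
    intro j
    constructor
    · intro h
      rw [hmod] at h
      rcases Nat.eq_zero_or_pos (j % p) with h0 | h0
      · exact Nat.dvd_of_mod_eq_zero h0
      · exact absurd h (hmin _ h0 (Nat.mod_lt _ hp0))
    · rintro ⟨c, rfl⟩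
      rw [show (p * c : ℕ) = 0 + c * p by ring, hmul]
      rw [show ((0:ℕ) : Fin (2^m)) = 0 by norm_cast, opZeroRight op hop]
  have hdvd : p ∣ 2^m := by
    apply (hiff (2^m)).1
    rw [Fin.natCast_self, opZeroRight op hop]
  have hbound : p + x.val ≤ 2^m := by
    by_contra hb
    push_neg at hb
    have hxlt := x.is_lt
    have hx1 : (1:ℕ) ≤ 2^m - x.val := by omega
    have hnz : ∀ i, 1 ≤ i → i < 1 + (2^m - x.val - 1) → op x ((i:ℕ) : Fin (2^m)) ≠ 0 := by
      intro i h1 h2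
      exact hmin i (by omega) (by omega)
    have hc := chain op hop x (2^m - x.val - 1) 1 hnz
    have hone : ((1:ℕ) : Fin (2^m)) = 1 := by norm_cast
    rw [hone, hop.2] at hc
    have hx1ne : x + 1 ≠ 0 := by
      intro hh
      have : op x ((1:ℕ) : Fin (2^m)) ≠ 0 := hmin 1 (by omega) (by omega)
      rw [hone, hop.2] at this
      exact this hh
    rw [val_add_one_of_ne x hx1ne] at hc
    have hlast : op x ((1 + (2^m - x.val - 1) : ℕ) : Fin (2^m)) ≠ 0 :=
      hmin _ (by omega) (by omega)
    rw [val'_of_ne _ hlast] at hc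
    have := (op x ((1 + (2^m - x.val - 1) : ℕ) : Fin (2^m))).is_lt
    omega
  exact ⟨p, hp0, hdvd, hbound, hiff, fun j k hk => by
    obtain ⟨c, rfl⟩ := hk
    rw [show (j + p * c : ℕ) = j + c * p by ring, hmul]⟩

/-- The element `2^(m-1)` of `Fin (2^m)`. -/
def halfF (m : ℕ) : Fin (2^m) := ((2^(m-1) : ℕ) : Fin (2^m))

omit hop

lemma mod_two_mul (t hh : ℕ) (ht : t < 2 * hh) : t % hh = if t < hh then t else t - hh := by
  split
  · exact Nat.mod_eq_of_lt ‹_›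
  · rename_i hge
    push_neg at hge
    rw [Nat.mod_eq_sub_mod hge, Nat.mod_eq_of_lt (by omega)]

lemma h2m (hm : 0 < m) : 2^m = 2^(m-1) + 2^(m-1) := by
  obtain ⟨m', rfl⟩ : ∃ m', m = m' + 1 := ⟨m - 1, by omega⟩
  rw [pow_succ]
  simp; ring

lemma val_H (hm : 0 < m) : (halfF m).val = 2^(m-1) := by
  rw [halfF, Fin.val_natCast, Nat.mod_eq_of_lt (by have := h2m (m := m) hm; have : 0 < 2^(m-1) := Nat.pow_pos (by norm_num); omega)]

lemma val_add_H (hm : 0 < m) (z : Fin (2^m)) :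
    (z + halfF m).val = if z.val < 2^(m-1) then z.val + 2^(m-1) else z.val - 2^(m-1) := by
  have h2 := h2m (m := m) hm
  have hz := z.is_lt
  rw [Fin.val_add, val_H hm, mod_two_mul _ _ (by omega)]
  split <;> split <;> omega

lemma H_add_H (hm : 0 < m) : halfF m + halfF m = 0 := by
  apply Fin.ext
  rw [val_add_H hm, val_H hm]
  simp

lemma pairLemma (hm : 0 < m) (u v : Fin (2^m))
    (huv : u.val % 2^(m-1) = v.val % 2^(m-1)) : v = u ∨ v = u + halfF m := by
  have h2 := h2m (m := m) hm
  have hu2 := u.is_lt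
  have hv2 := v.is_lt
  have hadd := val_add_H hm u
  by_cases hus : u.val < 2^(m-1)
  · by_cases hvs : v.val < 2^(m-1)
    · left; apply Fin.ext
      rw [Nat.mod_eq_of_lt hus, Nat.mod_eq_of_lt hvs] at huv
      omega
    · right; apply Fin.ext
      rw [hadd, if_pos hus]
      have hv' : v.val % 2^(m-1) = v.val - 2^(m-1) := by
        rw [mod_two_mul _ _ (by omega), if_neg hvs]
      rw [Nat.mod_eq_of_lt hus] at huv
      omega
  · by_cases hvs : v.val < 2^(m-1)
    · right; apply Fin.ext
      rw [hadd, if_neg hus]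
      have hu' : u.val % 2^(m-1) = u.val - 2^(m-1) := by
        rw [mod_two_mul _ _ (by omega), if_neg hus]
      rw [Nat.mod_eq_of_lt hvs] at huv
      omega
    · left; apply Fin.ext
      have hu' : u.val % 2^(m-1) = u.val - 2^(m-1) := by
        rw [mod_two_mul _ _ (by omega), if_neg hus]
      have hv' : v.val % 2^(m-1) = v.val - 2^(m-1) := by
        rw [mod_two_mul _ _ (by omega), if_neg hvs]
      omega

lemma valmodH (hm : 0 < m) (z : Fin (2^m)) :
    (z + halfF m).val % 2^(m-1) = z.val % 2^(m-1) := by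
  rw [val_add_H hm]
  split
  · exact Nat.add_mod_right _ _
  · rename_i hge
    push_neg at hge
    conv_rhs => rw [show z.val = (z.val - 2^(m-1)) + 2^(m-1) by omega]
    rw [Nat.add_mod_right]

lemma half_dvd (hm : 0 < m) : 2^(m-1) ∣ 2^m := ⟨2, by have := h2m (m := m) hm; omega⟩

lemma castmodH (hm : 0 < m) (k : ℕ) :
    (((k : ℕ) : Fin (2^m))).val % 2^(m-1) = k % 2^(m-1) := by
  rw [Fin.val_natCast, Nat.mod_mod_of_dvd _ (half_dvd hm)]

lemma modsucc (hh s t : ℕ) (hst : s % hh = t % hh) : (s + 1) % hh = (t + 1) % hh := by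
  rw [Nat.add_mod s, Nat.add_mod t, hst]

include hop

lemma perHalf (hm : 0 < m) (x : Fin (2^m)) (hx : x ≠ 0) (y : Fin (2^m)) :
    op x (y + halfF m) = op x y := by
  obtain ⟨p, hp0, hpdvd, hple, _hiff, hper⟩ := perFacts op hop x
  have hxval : 0 < x.val := by
    rcases Nat.eq_zero_or_pos x.val with h0 | h0
    · exact absurd (Fin.ext h0) hx
    · exact h0
  have hpbig : p ∣ 2^(m-1) := by
    obtain ⟨i, hi, rfl⟩ := (Nat.dvd_prime_pow Nat.prime_two).1 hpdvd
    apply pow_dvd_pow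
    rcases Nat.lt_or_ge i m with h | h
    · omega
    · exfalso
      have : 2^m ≤ 2^i := Nat.pow_le_pow_right (by norm_num) h
      omega
  have e : y + halfF m = ((y.val + 2^(m-1) : ℕ) : Fin (2^m)) := by
    rw [Nat.cast_add, Fin.cast_val_eq_self, halfF]
  rw [e, hper y.val _ hpbig, Fin.cast_val_eq_self]

lemma cong2All (hm : 0 < m) (x y : Fin (2^m)) :
    (op x (y + halfF m)).val % 2^(m-1) = (op x y).val % 2^(m-1) := by
  by_cases hx : x = 0
  · rw [hx, opZero op hop, opZero op hop, valmodH hm]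
  · rw [perHalf op hop hm x hx]

lemma rowH (hm : 0 < m) : ∀ k : ℕ,
    (op (halfF m) ((k : ℕ) : Fin (2^m))).val % 2^(m-1) = k % 2^(m-1) := by
  intro k
  induction k with
  | zero =>
    rw [show ((0:ℕ) : Fin (2^m)) = 0 by norm_cast, opZeroRight op hop]
    simp
  | succ k ih =>
    rw [opR_cast op hop]
    set a := op (halfF m) ((k : ℕ) : Fin (2^m)) with ha
    by_cases h0 : a = 0
    · rw [h0, opZero op hop]
      have e : halfF m + 1 = ((2^(m-1) + 1 : ℕ) : Fin (2^m)) := by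
        rw [Nat.cast_add, halfF, Nat.cast_one]
      rw [e, castmodH hm, Nat.add_comm (2^(m-1)) 1, Nat.add_mod_right]
      have hk : k % 2^(m-1) = 0 % 2^(m-1) := by
        rw [← ih, h0]; simp
      have := modsucc (2^(m-1)) 0 k hk.symm
      simpa using this
    · have e : halfF m + 1 = 1 + halfF m := by exact add_comm _ _
      rw [e, perHalf op hop hm a h0, hop.2]
      have e2 : a + 1 = ((a.val + 1 : ℕ) : Fin (2^m)) := by
        rw [Nat.cast_add, Fin.cast_val_eq_self, Nat.cast_one]
      rw [e2, castmodH hm]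
      exact modsucc _ _ _ ih

lemma rowHy (hm : 0 < m) (y : Fin (2^m)) :
    (op (halfF m) y).val % 2^(m-1) = y.val % 2^(m-1) := by
  conv_lhs => rw [← Fin.cast_val_eq_self y]
  rw [rowH op hop hm]

lemma congAux (hm : 0 < m) : ∀ d, ∀ x : Fin (2^m), x ≠ 0 → x.val < 2^(m-1) →
    2^(m-1) - x.val ≤ d → ∀ k : ℕ,
    (op (x + halfF m) ((k : ℕ) : Fin (2^m))).val % 2^(m-1)
      = (op x ((k : ℕ) : Fin (2^m))).val % 2^(m-1) := by
  intro d
  induction d with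
  | zero =>
    intro x hx0 hxh hd
    exfalso
    have : 0 < x.val := by
      rcases Nat.eq_zero_or_pos x.val with h0 | h0
      · exact absurd (Fin.ext h0) hx0
      · exact h0
    omega
  | succ d IH =>
    intro x hx0 hxh hd k
    induction k with
    | zero =>
      rw [show ((0:ℕ) : Fin (2^m)) = 0 by norm_cast, opZeroRight op hop, opZeroRight op hop]
    | succ k ihk =>
      rw [opR_cast op hop, opR_cast op hop]
      set a := op x ((k : ℕ) : Fin (2^m)) with hadef
      set b := op (x + halfF m) ((k : ℕ) : Fin (2^m)) with hbdef
      have e : x + halfF m + 1 = (x + 1) + halfF m := by exact add_right_comm _ _ _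
      rcases pairLemma hm a b ihk.symm with hb | hb
      · by_cases h0 : a = 0
        · rw [hb, h0, opZero op hop, opZero op hop, e, valmodH hm]
        · rw [hb, e, perHalf op hop hm a h0]
      · by_cases h0 : a = 0
        · rw [hb, h0, zero_add, opZero op hop, e, rowHy op hop hm, valmodH hm]
        · have hax : x.val < a.val := by
            have h1 := claimC op hop x ((k : ℕ) : Fin (2^m))
            rw [← hadef, val'_of_ne _ h0] at h1
            exact h1
          rcases Nat.lt_trichotomy a.val (2^(m-1)) with hlt | heq | hgt
          · have IHa := IH a h0 hlt (by omega)
            rw [hb]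
            have e2 : x + halfF m + 1
                = (((x + halfF m + 1 : Fin (2^m)).val : ℕ) : Fin (2^m)) :=
              (Fin.cast_val_eq_self _).symm
            rw [e2, IHa, ← e2, e, perHalf op hop hm a h0]
          · have haH : a = halfF m := Fin.ext (by rw [heq, val_H hm])
            rw [hb, haH, H_add_H hm, opZero op hop, e, valmodH hm,
              rowHy op hop hm]
          · exfalso
            have hvb : b.val = a.val - 2^(m-1) := by
              rw [hb, val_add_H hm, if_neg (by omega)]
            have hbne : b ≠ 0 := by
              intro hh
              rw [hh] at hvb
              simp at hvb
              omega
            have hC := claimC op hop (x + halfF m) ((k : ℕ) : Fin (2^m))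
            rw [← hbdef, val'_of_ne _ hbne] at hC
            have hxH : (x + halfF m).val = x.val + 2^(m-1) := by
              rw [val_add_H hm, if_pos hxh]
            have ha2 := a.is_lt
            have h2 := h2m (m := m) hm
            omega

lemma cong1All (hm : 0 < m) (x y : Fin (2^m)) :
    (op (x + halfF m) y).val % 2^(m-1) = (op x y).val % 2^(m-1) := by
  by_cases hx0 : x = 0
  · rw [hx0, zero_add, opZero op hop, rowHy op hop hm]
  rcases Nat.lt_trichotomy x.val (2^(m-1)) with hlt | heq | hgt
  · conv_lhs => rw [← Fin.cast_val_eq_self y]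
    conv_rhs => rw [← Fin.cast_val_eq_self y]
    exact congAux op hop hm (2^(m-1)) x hx0 hlt (by omega) y.val
  · have hxH : x = halfF m := Fin.ext (by rw [heq, val_H hm])
    rw [hxH, H_add_H hm, opZero op hop, rowHy op hop hm]
  · have hx' : (x + halfF m).val = x.val - 2^(m-1) := by
      rw [val_add_H hm, if_neg (by omega)]
    have hx'0 : x + halfF m ≠ 0 := by
      intro hh
      rw [hh] at hx'
      simp at hx'
      omega
    have hx'lt : (x + halfF m).val < 2^(m-1) := by
      have := h2m (m := m) hm
      have := x.is_lt
      omega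
    have hmain := congAux op hop hm (2^(m-1)) (x + halfF m) hx'0 hx'lt (by omega) y.val
    rw [add_assoc, H_add_H hm, add_zero] at hmain
    conv_lhs => rw [← Fin.cast_val_eq_self y]
    conv_rhs => rw [← Fin.cast_val_eq_self y]
    exact hmain.symm

lemma congGen (hm : 0 < m) (u u' v v' : Fin (2^m))
    (hu : u'.val % 2^(m-1) = u.val % 2^(m-1)) (hv : v'.val % 2^(m-1) = v.val % 2^(m-1)) :
    (op u' v').val % 2^(m-1) = (op u v).val % 2^(m-1) := by
  rcases pairLemma hm u u' hu.symm with h1 | h1 <;>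
    rcases pairLemma hm v v' hv.symm with h2 | h2 <;> subst h1 <;> subst h2
  · rfl
  · rw [cong2All op hop hm]
  · rw [cong1All op hop hm]
  · rw [cong2All op hop hm, cong1All op hop hm]

end Ops

section Quot
variable {m : ℕ}

def liftF : Fin (2^m) → Fin (2^(m+1)) :=
  Fin.castLE (Nat.pow_le_pow_right (by norm_num) (Nat.le_succ m))

def quotF : Fin (2^(m+1)) → Fin (2^m) :=
  fun z => ⟨z.val % 2^m, Nat.mod_lt _ (Nat.pow_pos (by norm_num))⟩

lemma liftF_val (u : Fin (2^m)) : (liftF u).val = u.val := rfl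

lemma quotF_val (z : Fin (2^(m+1))) : (quotF z).val = z.val % 2^m := rfl

variable (op : Fin (2^(m+1)) → Fin (2^(m+1)) → Fin (2^(m+1))) (hop : IsCyclicLD (m+1) op)

def quotOp : Fin (2^m) → Fin (2^m) → Fin (2^m) :=
  fun u v => quotF (op (liftF u) (liftF v))

lemma pow_red : (2 : ℕ)^(m + 1 - 1) = 2^m := rfl

include hop

lemma quotOp_val (u v : Fin (2^(m+1))) :
    (quotOp op (quotF u) (quotF v)).val = (op u v).val % 2^m := by
  show (op (liftF (quotF u)) (liftF (quotF v))).val % 2^m = (op u v).val % 2^m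
  have h1 : (liftF (quotF u)).val % 2^(m+1-1) = u.val % 2^(m+1-1) := by
    rw [pow_red, liftF_val, quotF_val, Nat.mod_mod_of_dvd _ (dvd_refl _)]
  have h2 : (liftF (quotF v)).val % 2^(m+1-1) = v.val % 2^(m+1-1) := by
    rw [pow_red, liftF_val, quotF_val, Nat.mod_mod_of_dvd _ (dvd_refl _)]
  have := congGen op hop (by omega) u (liftF (quotF u)) v (liftF (quotF v)) h1 h2
  rw [pow_red] at this
  exact this

lemma quotOp_cyclicLD (hm : 0 < m) : IsCyclicLD m (quotOp op) := by
  constructor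
  · intro a b c
    apply Fin.ext
    have hA : quotF (liftF a) = a := by
      apply Fin.ext
      rw [quotF_val, liftF_val, Nat.mod_eq_of_lt a.is_lt]
    calc (quotOp op a (quotOp op b c)).val
        = (quotOp op (quotF (liftF a)) (quotF (op (liftF b) (liftF c)))).val := by
          rw [hA]; rfl
      _ = (op (liftF a) (op (liftF b) (liftF c))).val % 2^m := quotOp_val op hop _ _
      _ = (op (op (liftF a) (liftF b)) (op (liftF a) (liftF c))).val % 2^m := by
          rw [hop.1]
      _ = (quotOp op (quotF (op (liftF a) (liftF b)))
            (quotF (op (liftF a) (liftF c)))).val := (quotOp_val op hop _ _).symm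
      _ = (quotOp op (quotOp op a b) (quotOp op a c)).val := rfl
  · intro a
    apply Fin.ext
    have hone : liftF (m := m) 1 = (1 : Fin (2^(m+1))) := by
      apply Fin.ext
      rw [liftF_val, val_one hm, val_one (show 0 < m + 1 by omega)]
    show (op (liftF a) (liftF 1)).val % 2^m = ((a + 1 : Fin (2^m))).val
    rw [hone, hop.2]
    have hv : (liftF a + 1).val = (a.val + 1) % 2^(m+1) := by
      rw [Fin.val_add, liftF_val, val_one (show 0 < m + 1 by omega)]
    have hv2 : (a + 1 : Fin (2^m)).val = (a.val + 1) % 2^m := by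
      rw [Fin.val_add, val_one hm]
    rw [hv, hv2, Nat.mod_mod_of_dvd _ (pow_dvd_pow 2 (Nat.le_succ m))]

end Quot

section Main

lemma P1 (n : ℕ) (hn : 1 ≤ n) (op : Fin (2^(n+2)) → Fin (2^(n+2)) → Fin (2^(n+2)))
    (hop : IsCyclicLD (n+2) op) (s : ℕ) (hs0 : 0 < s) (hs : s < 2^n) :
    op ((2^n + s : ℕ) : Fin (2^(n+2))) ((2^n : ℕ) : Fin (2^(n+2))) = 0 := by
  have hq : (0:ℕ) < 2^n := Nat.pow_pos (by norm_num)
  have e1 : (2:ℕ)^(n+1) = 2^n * 2 := pow_succ 2 n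
  have e2 : (2:ℕ)^(n+2) = 2^(n+1) * 2 := pow_succ 2 (n+1)
  set op' := quotOp (m := n+1) op with hop'def
  have hop' : IsCyclicLD (n+1) op' := quotOp_cyclicLD op hop (by omega)
  set x : Fin (2^(n+2)) := ((2^n + s : ℕ) : Fin (2^(n+2))) with hxdef
  have hxval : x.val = 2^n + s := by
    rw [hxdef, Fin.val_natCast, Nat.mod_eq_of_lt (by omega)]
  set x' : Fin (2^(n+1)) := quotF x with hx'def
  have hx'val : x'.val = 2^n + s := by
    rw [hx'def, quotF_val, hxval, Nat.mod_eq_of_lt (by omega)]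
  have hx'0 : x' ≠ 0 := by
    intro hh
    rw [hh] at hx'val
    simp at hx'val
    omega
  -- homomorphism relation
  have hom : ∀ j : ℕ, (op x ((j:ℕ) : Fin (2^(n+2)))).val % 2^(n+1)
      = (op' x' ((j : ℕ) : Fin (2^(n+1)))).val := by
    intro j
    have hcast : ((j : ℕ) : Fin (2^(n+1))) = quotF ((j : ℕ) : Fin (2^(n+2))) := by
      apply Fin.ext
      rw [quotF_val, Fin.val_natCast, Fin.val_natCast,
        Nat.mod_mod_of_dvd _ (pow_dvd_pow 2 (by omega))]
    rw [hcast, hx'def, hop'def, quotOp_val op hop]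
  obtain ⟨p', hp'0, hp'dvd, hp'le, hp'iff, _⟩ := perFacts op' hop' x'
  obtain ⟨i, hi, rfl⟩ := (Nat.dvd_prime_pow Nat.prime_two).1 hp'dvd
  have hilt : (2:ℕ)^i < 2^n := by omega
  have hin : i < n := by
    by_contra hh
    push_neg at hh
    have : (2:ℕ)^n ≤ 2^i := Nat.pow_le_pow_right (by norm_num) hh
    omega
  obtain ⟨p, hp0, hpdvd, hple, hpiff, _⟩ := perFacts op hop x
  have hz' : (op x ((2^i : ℕ) : Fin (2^(n+2)))).val % 2^(n+1) = 0 := by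
    rw [hom]
    rw [(hp'iff (2^i)).2 dvd_rfl]
    simp
  have hw' : (op x ((2^(i+1) : ℕ) : Fin (2^(n+2)))).val % 2^(n+1) = 0 := by
    rw [hom]
    rw [(hp'iff (2^(i+1))).2 (pow_dvd_pow 2 (Nat.le_succ i))]
    simp
  have hkey : p ∣ 2^(i+1) := by
    by_cases hzz : op x ((2^i : ℕ) : Fin (2^(n+2))) = 0
    · exact dvd_trans ((hpiff _).1 hzz) (pow_dvd_pow 2 (Nat.le_succ i))
    · have hzval : (op x ((2^i : ℕ) : Fin (2^(n+2)))).val = 2^(n+1) := by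
        have hlt := (op x ((2^i : ℕ) : Fin (2^(n+2)))).is_lt
        have hne : (op x ((2^i : ℕ) : Fin (2^(n+2)))).val ≠ 0 :=
          fun hh => hzz (Fin.ext hh)
        have := Nat.div_add_mod (op x ((2^i : ℕ) : Fin (2^(n+2)))).val (2^(n+1))
        have h2 : (0:ℕ) < 2^(n+1) := by omega
        rcases Nat.lt_or_ge (op x ((2^i : ℕ) : Fin (2^(n+2)))).val (2^(n+1)) with h | h
        · rw [Nat.mod_eq_of_lt h] at hz'
          omega
        · rw [Nat.mod_eq_sub_mod h, Nat.mod_eq_of_lt (by omega)] at hz'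
          omega
      by_cases hww : op x ((2^(i+1) : ℕ) : Fin (2^(n+2))) = 0
      · exact (hpiff _).1 hww
      · exfalso
        have hwval : (op x ((2^(i+1) : ℕ) : Fin (2^(n+2)))).val = 2^(n+1) := by
          have hlt := (op x ((2^(i+1) : ℕ) : Fin (2^(n+2)))).is_lt
          have hne : (op x ((2^(i+1) : ℕ) : Fin (2^(n+2)))).val ≠ 0 :=
            fun hh => hww (Fin.ext hh)
          rcases Nat.lt_or_ge (op x ((2^(i+1) : ℕ) : Fin (2^(n+2)))).val (2^(n+1)) with h | h
          · rw [Nat.mod_eq_of_lt h] at hw'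
            omega
          · rw [Nat.mod_eq_sub_mod h, Nat.mod_eq_of_lt (by omega)] at hw'
            omega
        obtain ⟨α, hα, rfl⟩ := (Nat.dvd_prime_pow Nat.prime_two).1 hpdvd
        have hα1 : ¬ (2:ℕ)^α ∣ 2^i := fun hd => hzz ((hpiff _).2 hd)
        have hα2 : ¬ (2:ℕ)^α ∣ 2^(i+1) := fun hd => hww ((hpiff _).2 hd)
        have hαbig : i + 2 ≤ α := by
          by_contra hh
          push_neg at hh
          exact hα2 (pow_dvd_pow 2 (by omega))
        have hnz : ∀ j, 2^i ≤ j → j < 2^i + 2^i → op x ((j:ℕ) : Fin (2^(n+2))) ≠ 0 := by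
          intro j hj1 hj2 hj3
          have hd := (hpiff j).1 hj3
          have hjpos : 0 < j := by omega
          have : (2:ℕ)^α ≤ j := Nat.le_of_dvd hjpos hd
          have h1 : (2:ℕ)^(i+2) ≤ 2^α := Nat.pow_le_pow_right (by norm_num) hαbig
          have h2 : (2:ℕ)^(i+2) = 2^i * 4 := by rw [pow_add]; norm_num
          omega
        have hchain := chain op hop x (2^i) (2^i) hnz
        rw [hzval] at hchain
        have hee : (2:ℕ)^i + 2^i = 2^(i+1) := by rw [pow_succ]; omega
        rw [hee, val'_of_ne _ hww, hwval] at hchain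
        omega
  have hfin : p ∣ 2^n := dvd_trans hkey (pow_dvd_pow 2 (by omega))
  exact (hpiff (2^n)).2 hfin

end Main

end CLD


/-- in `A_{n+2}`, `2^n *_{n+2} a = 2^n + a` for all `1 ≤ a ≤ 2^n`. -/
theorem pow_mul_small (n : ℕ) (a : ℕ) (ha1 : 1 ≤ a) (ha2 : a ≤ 2^n)
    (op : Fin (2^(n+2)) → Fin (2^(n+2)) → Fin (2^(n+2))) (hop : IsCyclicLD (n+2) op) :
    op ((2^n : ℕ) : Fin (2^(n+2))) ((a : ℕ) : Fin (2^(n+2))) =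
      ((2^n + a : ℕ) : Fin (2^(n+2))) := by
  match n with
  | 0 =>
    norm_num at ha2
    have ha : a = 1 := le_antisymm ha2 ha1
    subst ha
    have h1 : ((1 : ℕ) : Fin (2^(0+2))) = 1 := by norm_cast
    rw [h1, hop.2]
    decide
  | (n' + 1) =>
    suffices H : ∀ b, 1 ≤ b → b ≤ 2^(n'+1) →
        op ((2^(n'+1) : ℕ) : Fin (2^(n'+1+2))) ((b : ℕ) : Fin (2^(n'+1+2)))
          = ((2^(n'+1) + b : ℕ) : Fin (2^(n'+1+2))) by
      exact H a ha1 ha2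
    intro b hb1
    induction b, hb1 using Nat.le_induction with
    | base =>
      intro _
      have h1 : ((1 : ℕ) : Fin (2^(n'+1+2))) = 1 := by norm_cast
      rw [h1, hop.2]
      push_cast
      ring
    | succ b hb IH =>
      intro hble
      have hblt : b < 2^(n'+1) := by omega
      rw [CLD.opR_cast op hop, IH (by omega), CLD.opR op hop,
        CLD.P1 (n'+1) (by omega) op hop b (by omega) hblt, CLD.opZero op hop]
      push_cast
      exact add_assoc _ _ _
end

section
/- For every natural number n, in the cyclic left-distributive algebra A_{n+2} one has (2^n − 1) *_{n+2} 2 = 2^{n+1}. -/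
-- assume previous defs present; re-include for test
def F (k : ℕ) (a b : ℕ) : ℕ :=
  if h : a < 2^k then
    if b ≤ 1 then a + b
    else
      let u := F k a (b-1)
      if h2 : a < u ∧ u ≤ 2^k then F k u (a+1) else 0
  else b
termination_by (2^k - a, b)
decreasing_by
  · apply Prod.Lex.right; omega
  · apply Prod.Lex.left; omega
lemma F_stop (k a b : ℕ) (h : 2^k ≤ a) : F k a b = b := by
  rw [F]; simp [Nat.not_lt.2 h]
lemma F_one (k a : ℕ) (h : a < 2^k) : F k a 1 = a + 1 := by
  rw [F]; simp [h]
lemma F_rec_def (k a b : ℕ) (h : a < 2^k) (hb : 2 ≤ b)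
    (hu : a < F k a (b-1) ∧ F k a (b-1) ≤ 2^k) :
    F k a b = F k (F k a (b-1)) (a+1) := by
  conv_lhs => rw [F]
  simp only [h, dif_pos]
  rw [if_neg (by omega)]
  simp only [hu, dif_pos, and_self]
lemma F_main (k : ℕ) : ∀ t a, 2^k - a ≤ t → a < 2^k → ∀ b, 1 ≤ b →
    (a < F k a b ∧ F k a b ≤ 2^k) ∧ F k a (b+1) = F k (F k a b) (a+1) := by
  intro t
  induction t with
  | zero => intro a ht ha; omega
  | succ t ih =>
    intro a ht ha b hb
    induction b with
    | zero => omega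
    | succ b ihb =>
      rcases Nat.eq_zero_or_pos b with rfl | hb1
      · have h1 : F k a 1 = a + 1 := F_one k a ha
        have hbd : a < F k a 1 ∧ F k a 1 ≤ 2^k := by rw [h1]; omega
        refine ⟨hbd, ?_⟩
        exact F_rec_def k a 2 ha le_rfl (by simpa using hbd)
      · obtain ⟨hbd, hrec⟩ := ihb hb1
        have hbd1 : a < F k a (b+1) ∧ F k a (b+1) ≤ 2^k := by
          rw [hrec]
          set u := F k a b with hu
          rcases Nat.lt_or_ge u (2^k) with hlt | hge
          · have := (ih u (by omega) hlt (a+1) (by omega)).1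
            omega
          · rw [F_stop k u (a+1) hge]; omega
        refine ⟨hbd1, ?_⟩
        exact F_rec_def k a (b+2) ha (by omega) (by simpa using hbd1)
lemma F_bounds (k a b : ℕ) (h : a < 2^k) (hb : 1 ≤ b) :
    a < F k a b ∧ F k a b ≤ 2^k :=
  (F_main k (2^k - a) a le_rfl h b hb).1
lemma F_rec (k a b : ℕ) (h : a < 2^k) (hb : 1 ≤ b) :
    F k a (b+1) = F k (F k a b) (a+1) :=
  (F_main k (2^k - a) a le_rfl h b hb).2

-- period machinery
lemma F_exists_top (k a : ℕ) (h : a < 2^k) :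
    ∃ b, 1 ≤ b ∧ b ≤ 2^k - a ∧ F k a b = 2^k := by
  have key : ∀ j, 1 ≤ j → (∃ b, 1 ≤ b ∧ b ≤ j ∧ F k a b = 2^k) ∨ a + j ≤ F k a j := by
    intro j hj
    induction j with
    | zero => omega
    | succ j ihj =>
      rcases Nat.eq_zero_or_pos j with rfl | hj1
      · right; rw [F_one k a h]
      · rcases ihj hj1 with ⟨b, hb⟩ | hge
        · exact Or.inl ⟨b, hb.1, by omega, hb.2.2⟩
        · rcases Nat.eq_or_lt_of_le (F_bounds k a j h hj1).2 with heq | hlt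
          · exact Or.inl ⟨j, hj1, by omega, heq⟩
          · right
            rw [F_rec k a j h hj1]
            have hlt2 : F k a j < 2^k := hlt
            have := (F_bounds k (F k a j) (a+1) hlt2 (by omega)).1
            omega
  rcases key (2^k - a) (by omega) with ⟨b, hb⟩ | hge
  · exact ⟨b, hb⟩
  · have hle := (F_bounds k a (2^k - a) h (by omega)).2
    exact ⟨2^k - a, by omega, le_rfl, by omega⟩

noncomputable def piF (k a : ℕ) : ℕ := sInf {b | 1 ≤ b ∧ F k a b = 2^k}

lemma piF_spec (k a : ℕ) (h : a < 2^k) :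
    1 ≤ piF k a ∧ F k a (piF k a) = 2^k := by
  obtain ⟨b, hb1, _, hbt⟩ := F_exists_top k a h
  have : {b | 1 ≤ b ∧ F k a b = 2^k}.Nonempty := ⟨b, hb1, hbt⟩
  exact Nat.sInf_mem this

lemma piF_le (k a : ℕ) (h : a < 2^k) : piF k a ≤ 2^k - a := by
  obtain ⟨b, hb1, hble, hbt⟩ := F_exists_top k a h
  have : piF k a ≤ b := Nat.sInf_le (⟨hb1, hbt⟩ : b ∈ {b | 1 ≤ b ∧ F k a b = 2^k})
  omega

lemma piF_min (k a b : ℕ) (hb : 1 ≤ b) (hlt : b < piF k a) : F k a b ≠ 2^k := by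
  intro he
  have : piF k a ≤ b := Nat.sInf_le (⟨hb, he⟩ : b ∈ {b | 1 ≤ b ∧ F k a b = 2^k})
  omega

lemma F_period (k a : ℕ) (h : a < 2^k) :
    ∀ b, 1 ≤ b → F k a (piF k a + b) = F k a b := by
  obtain ⟨hp1, hpt⟩ := piF_spec k a h
  intro b hb
  induction b with
  | zero => omega
  | succ b ihb =>
    rcases Nat.eq_zero_or_pos b with rfl | hb1
    · have : piF k a + 1 = piF k a + 1 := rfl
      rw [show piF k a + 1 = (piF k a) + 1 from rfl, F_rec k a (piF k a) h hp1, hpt,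
        F_stop k (2^k) (a+1) le_rfl, F_one k a h]
    · rw [show piF k a + (b+1) = (piF k a + b) + 1 from rfl,
        F_rec k a (piF k a + b) h (by omega), ihb hb1, ← F_rec k a b h hb1]

lemma F_top_iff (k a b : ℕ) (h : a < 2^k) (hb : 1 ≤ b) :
    F k a b = 2^k ↔ piF k a ∣ b := by
  obtain ⟨hp1, hpt⟩ := piF_spec k a h
  have peel : ∀ q r, 1 ≤ r → F k a (piF k a * q + r) = F k a r := by
    intro q
    induction q with
    | zero => simp
    | succ q ihq =>
      intro r hr
      have : piF k a * (q+1) + r = piF k a + (piF k a * q + r) := by ring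
      rw [this, F_period k a h _ (by omega), ihq r hr]
  constructor
  · intro he
    rcases Nat.eq_zero_or_pos (b % piF k a) with hr | hr
    · exact Nat.dvd_of_mod_eq_zero hr
    · exfalso
      have hdec : b = piF k a * (b / piF k a) + b % piF k a := (Nat.div_add_mod b (piF k a)).symm
      rw [hdec, peel _ _ hr] at he
      exact piF_min k a _ hr (Nat.mod_lt b (by omega)) he
  · rintro ⟨q, rfl⟩
    have hq : 1 ≤ q := by
      rcases Nat.eq_zero_or_pos q with rfl | h1
      · omega
      · exact h1
    clear hb
    induction q with
    | zero => omega
    | succ q ihq =>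
      rcases Nat.eq_zero_or_pos q with rfl | hq1
      · simpa using hpt
      · have : piF k a * (q+1) = piF k a + piF k a * q := by ring
        rw [this, F_period k a h _ (by nlinarith), ihq hq1]

/-! ### residue representative in `[1, h]` -/

def rho (h x : ℕ) : ℕ := (x - 1) % h + 1

lemma rho_pos (h x : ℕ) : 1 ≤ rho h x := Nat.le_add_left 1 _

lemma rho_le (h x : ℕ) (hh : 1 ≤ h) : rho h x ≤ h := by
  have := Nat.mod_lt (x-1) (show 0 < h by omega)
  unfold rho; omega

lemma rho_mod (h x : ℕ) (hx : 1 ≤ x) : rho h x % h = x % h := by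
  unfold rho
  have h1 : ((x-1) % h + 1) % h = ((x-1) + 1) % h :=
    Nat.ModEq.add_right 1 (Nat.mod_modEq (x-1) h)
  rw [h1, show x - 1 + 1 = x by omega]

lemma rho_eq_self (h x : ℕ) (hx : 1 ≤ x) (hxh : x ≤ h) : rho h x = x := by
  unfold rho
  rw [Nat.mod_eq_of_lt (by omega)]
  omega

lemma rho_succ (h x : ℕ) (hh : 1 ≤ h) (hx : 1 ≤ x) :
    (rho h x = h ∧ rho h (x+1) = 1) ∨ (rho h x < h ∧ rho h (x+1) = rho h x + 1) := by
  have h1 : rho h (x+1) = x % h + 1 := by unfold rho; simp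
  have h2 : x % h = ((x-1) % h + 1) % h := by
    conv_lhs => rw [show x = (x-1)+1 by omega]
    exact (Nat.ModEq.add_right 1 (Nat.mod_modEq (x-1) h)).symm
  have hr : (x-1) % h < h := Nat.mod_lt _ (by omega)
  rcases Nat.eq_or_lt_of_le (Nat.succ_le_of_lt hr) with he | hlt
  · left
    constructor
    · unfold rho; omega
    · rw [h1, h2]
      have : (x-1) % h + 1 = h := by omega
      rw [this, Nat.mod_self]
  · right
    have : x % h = (x-1) % h + 1 := by rw [h2, Nat.mod_eq_of_lt hlt]
    constructor
    · unfold rho; omega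
    · rw [h1, this]; rfl

/-- two numbers in `(c, c+h]` congruent mod `h` are equal -/
lemma mod_window_eq (h c z w : ℕ) (hzw : z % h = w % h)
    (hz1 : c < z) (hz2 : z ≤ c + h) (hw1 : c < w) (hw2 : w ≤ c + h) : z = w := by
  rcases le_or_gt z w with hle | hlt
  · have hd : h ∣ w - z := (Nat.modEq_iff_dvd' hle).1 hzw
    rcases hd with ⟨q, hq⟩
    have : q = 0 := by
      by_contra hq0
      have : h * 1 ≤ h * q := Nat.mul_le_mul_left h (by omega)
      omega
    subst this
    simp at hq
    omega
  · have hd : h ∣ z - w := (Nat.modEq_iff_dvd' (by omega)).1 hzw.symm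
    rcases hd with ⟨q, hq⟩
    have : q = 0 := by
      by_contra hq0
      have : h * 1 ≤ h * q := Nat.mul_le_mul_left h (by omega)
      omega
    subst this
    simp at hq
    omega

/-! ### the congruence (projection) lemma -/

lemma CONG (k : ℕ)
    (hP4 : ∀ a, 1 ≤ a → a ≤ 2^k → F k a (2^k) = 2^k) :
    ∀ a, 1 ≤ a → a ≤ 2^(k+1) → ∀ b, 1 ≤ b → b ≤ 2^(k+1) →
      F (k+1) a b % 2^k = F k (rho (2^k) a) (rho (2^k) b) % 2^k := by
  have hh : 1 ≤ 2^k := Nat.one_le_two_pow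
  have hN : 2^(k+1) = 2 * 2^k := by rw [pow_succ]; ring
  suffices key : ∀ t a, 2^(k+1) - a ≤ t → 1 ≤ a → a ≤ 2^(k+1) → ∀ b, 1 ≤ b → b ≤ 2^(k+1) →
      F (k+1) a b % 2^k = F k (rho (2^k) a) (rho (2^k) b) % 2^k by
    intro a ha1 ha2; exact key (2^(k+1) - a) a le_rfl ha1 ha2
  intro t
  induction t with
  | zero =>
    intro a ht ha1 ha2 b hb1 hb2
    have haN : a = 2^(k+1) := by omega
    subst haN
    have e0 : rho (2^k) (2^(k+1)) = 2^k := by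
      unfold rho
      rw [show 2^(k+1) - 1 = 2^k + (2^k - 1) by omega, Nat.add_mod_left,
        Nat.mod_eq_of_lt (by omega)]
      omega
    rw [F_stop (k+1) _ b (by omega), e0, F_stop k _ _ le_rfl, rho_mod _ b hb1]
  | succ t ih =>
    intro a ht ha1 ha2 b hb1 hb2
    rcases Nat.eq_or_lt_of_le ha2 with haN | haN
    · -- same as base case: a = 2^(k+1)
      subst haN
      have e0 : rho (2^k) (2^(k+1)) = 2^k := by
        unfold rho
        rw [show 2^(k+1) - 1 = 2^k + (2^k - 1) by omega, Nat.add_mod_left,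
          Nat.mod_eq_of_lt (by omega)]
        omega
      rw [F_stop (k+1) _ b (by omega), e0, F_stop k _ _ le_rfl, rho_mod _ b hb1]
    · -- a < 2^(k+1)
      induction b with
      | zero => omega
      | succ b ihb =>
        set ra := rho (2^k) a with hra
        have hra1 : 1 ≤ ra := rho_pos _ _
        have hrale : ra ≤ 2^k := rho_le _ _ hh
        have hramod : ra % 2^k = a % 2^k := rho_mod _ a ha1
        rcases Nat.eq_zero_or_pos b with rfl | hb0
        · -- column 1
          have e1 : rho (2^k) 1 = 1 := rho_eq_self _ _ le_rfl hh
          rw [F_one (k+1) a haN, e1]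
          rcases Nat.eq_or_lt_of_le hrale with he | hlt
          · rw [he, F_stop k _ _ le_rfl]
            have h0 : a % 2^k = 0 % 2^k := by
              rw [← hramod, he, Nat.mod_self, Nat.zero_mod]
            exact Nat.ModEq.add_right 1 h0
          · rw [F_one k ra hlt]
            exact (Nat.ModEq.add_right 1 hramod).symm
        · -- column b+1, b ≥ 1
          have hbb : b ≤ 2^(k+1) := by omega
          have ihb' := ihb hb0 hbb
          set rb := rho (2^k) b with hrb
          have hrb1 : 1 ≤ rb := rho_pos _ _
          have hrble : rb ≤ 2^k := rho_le _ _ hh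
          set u := F (k+1) a b with hu
          have hub : a < u ∧ u ≤ 2^(k+1) := F_bounds (k+1) a b haN hb0
          have hrecu : F (k+1) a (b+1) = F (k+1) u (a+1) := F_rec (k+1) a b haN hb0
          set v := F k ra rb with hv
          have hvb : 1 ≤ v ∧ v ≤ 2^k := by
            rcases Nat.eq_or_lt_of_le hrale with he | hlt
            · rw [hv, he, F_stop k _ _ le_rfl]; exact ⟨hrb1, hrble⟩
            · have := F_bounds k ra rb hlt hrb1
              omega
          have hvu : rho (2^k) u = v := by
            apply mod_window_eq (2^k) 0
            · rw [rho_mod _ u (by omega)]; exact ihb'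
            · have := rho_pos (2^k) u; omega
            · have := rho_le (2^k) u hh; omega
            · omega
            · omega
          have houter := ih u (by omega) (by omega) hub.2 (a+1) (by omega) (by omega)
          rw [hvu] at houter
          rw [hrecu, houter]
          -- now: F k v (rho (a+1)) % 2^k = F k ra (rho (b+1)) % 2^k
          rcases rho_succ (2^k) a hh ha1 with ⟨hae, hae1⟩ | ⟨hae, hae1⟩
          · -- ra = 2^k
            rw [← hra] at hae
            rw [hae1]
            have hvrb : v = rb := by rw [hv, hae, F_stop k _ _ le_rfl]
            rcases rho_succ (2^k) b hh hb0 with ⟨hbe, hbe1⟩ | ⟨hbe, hbe1⟩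
            · rw [← hrb] at hbe
              rw [hbe1, hae, F_stop k _ _ le_rfl, hvrb, hbe,
                F_stop k _ _ le_rfl]
            · rw [← hrb] at hbe hbe1
              rw [hbe1, hae, F_stop k _ _ le_rfl, hvrb, F_one k rb hbe]
          · -- ra < 2^k
            rw [← hra] at hae hae1
            rw [hae1]
            rcases rho_succ (2^k) b hh hb0 with ⟨hbe, hbe1⟩ | ⟨hbe, hbe1⟩
            · -- rb = 2^k : v = 2^k
              rw [← hrb] at hbe
              have hv2 : v = 2^k := by rw [hv, hbe]; exact hP4 ra hra1 (by omega)
              rw [hbe1, hv2, F_stop k _ _ le_rfl, F_one k ra hae]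
            · -- rb < 2^k : exact recursion at level k
              rw [← hrb] at hbe hbe1
              rw [hbe1, F_rec k ra rb hae hrb1]

section LevelStep

lemma upper_col_half (k : ℕ) (hP4 : ∀ a, 1 ≤ a → a ≤ 2^k → F k a (2^k) = 2^k) (x : ℕ) (hx1 : 2^k < x) (hx2 : x < 2^(k+1)) :
    F (k+1) x (2^k) = 2^(k+1) := by
  have hh : 1 ≤ 2^k := Nat.one_le_two_pow
  have hN : 2^(k+1) = 2 * 2^k := by rw [pow_succ]; ring
  have hc := CONG k hP4 x (by omega) (by omega) (2^k) hh (by omega)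
  rw [rho_eq_self _ _ hh le_rfl] at hc
  rw [hP4 _ (rho_pos _ _) (rho_le _ _ hh), Nat.mod_self] at hc
  have hb := F_bounds (k+1) x (2^k) (by omega) hh
  apply mod_window_eq (2^k) (2^k)
  · rw [hc, hN]; exact (Nat.mul_mod_left 2 (2^k)).symm
  · omega
  · omega
  · omega
  · omega

lemma row_half (k : ℕ) (hP4 : ∀ a, 1 ≤ a → a ≤ 2^k → F k a (2^k) = 2^k) (y : ℕ) (hy1 : 1 ≤ y) (hy2 : y ≤ 2^k) :
    F (k+1) (2^k) y = 2^k + y := by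
  have hh : 1 ≤ 2^k := Nat.one_le_two_pow
  have hN : 2^(k+1) = 2 * 2^k := by rw [pow_succ]; ring
  induction y with
  | zero => omega
  | succ y ihy =>
    rcases Nat.eq_zero_or_pos y with rfl | hy0
    · rw [F_one (k+1) _ (by omega)]
    · rw [F_rec (k+1) (2^k) y (by omega) hy0, ihy hy0 (by omega)]
      rw [show 2^k + 1 = (2^k) + 1 from rfl]
      have hx : 2^k < 2^k + y ∧ 2^k + y < 2^(k+1) := by omega
      rw [F_rec (k+1) (2^k + y) (2^k) (by omega) hh,
        upper_col_half k hP4 _ hx.1 hx.2, F_stop (k+1) _ _ le_rfl]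
      omega

lemma upper_row (k : ℕ) (hP4 : ∀ a, 1 ≤ a → a ≤ 2^k → F k a (2^k) = 2^k) (s y : ℕ) (hs1 : 1 ≤ s) (hs2 : s < 2^k) (hy1 : 1 ≤ y)
    (hy2 : y ≤ 2^(k+1)) :
    F (k+1) (2^k + s) y = 2^k + F k s (rho (2^k) y) := by
  have hh : 1 ≤ 2^k := Nat.one_le_two_pow
  have hN : 2^(k+1) = 2 * 2^k := by rw [pow_succ]; ring
  have hc := CONG k hP4 (2^k + s) (by omega) (by omega) y hy1 hy2
  have e1 : rho (2^k) (2^k + s) = s := by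
    unfold rho
    rw [show 2^k + s - 1 = 2^k + (s - 1) by omega, Nat.add_mod_left,
      Nat.mod_eq_of_lt (by omega)]
    omega
  rw [e1] at hc
  have hry1 : 1 ≤ rho (2^k) y := rho_pos _ _
  have hry2 : rho (2^k) y ≤ 2^k := rho_le _ _ hh
  have hfb := F_bounds k s (rho (2^k) y) hs2 hry1
  have hb := F_bounds (k+1) (2^k + s) y (by omega) hy1
  apply mod_window_eq (2^k) (2^k + s)
  · rw [hc, Nat.add_mod_left]
  · omega
  · omega
  · omega
  · omega

lemma dich (k : ℕ) (hP4 : ∀ a, 1 ≤ a → a ≤ 2^k → F k a (2^k) = 2^k) (a : ℕ) (ha1 : 1 ≤ a) (ha2 : a < 2^k) :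
    piF (k+1) a ∣ 2 * piF k a := by
  have hh : 1 ≤ 2^k := Nat.one_le_two_pow
  have hN : 2^(k+1) = 2 * 2^k := by rw [pow_succ]; ring
  obtain ⟨hp1, hptop⟩ := piF_spec k a ha2
  have hple : piF k a ≤ 2^k - a := piF_le k a ha2
  set p := piF k a with hp
  have hc := CONG k hP4 a ha1 (by omega) p hp1 (by omega)
  rw [rho_eq_self _ _ ha1 (by omega), rho_eq_self _ _ hp1 (by omega), hptop,
    Nat.mod_self] at hc
  have hb := F_bounds (k+1) a p (by omega) hp1
  have hcand : F (k+1) a p = 2^k ∨ F (k+1) a p = 2^(k+1) := by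
    obtain ⟨q, hq⟩ := Nat.dvd_of_mod_eq_zero hc
    have hq1 : 1 ≤ q := by
      rcases Nat.eq_zero_or_pos q with rfl | h; · simp at hq; omega
      · exact h
    have hq2 : q ≤ 2 := by
      by_contra hq3
      have : 2^k * 3 ≤ 2^k * q := Nat.mul_le_mul_left _ (by omega)
      omega
    interval_cases q
    · left; omega
    · right; omega
  rcases hcand with hD | hD
  · -- doubling case
    have hdl : ∀ r, 1 ≤ r → r ≤ p → F (k+1) a (p + r) = 2^k + F k a r := by
      intro r hr1 hr2
      induction r with
      | zero => omega
      | succ r ihr =>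
        rcases Nat.eq_zero_or_pos r with rfl | hr0
        · rw [F_rec (k+1) a p (by omega) hp1, hD, row_half k hP4 (a+1) (by omega) (by omega),
            F_one k a ha2]
        · have ihr' := ihr hr0 (by omega)
          have hsb := F_bounds k a r ha2 hr0
          have hsne : F k a r ≠ 2^k := piF_min k a r hr0 (by omega)
          rw [show p + (r+1) = (p + r) + 1 from rfl,
            F_rec (k+1) a (p+r) (by omega) (by omega), ihr',
            upper_row k hP4 (F k a r) (a+1) (by omega) (by omega) (by omega) (by omega),
            rho_eq_self _ _ (by omega) (by omega), ← F_rec k a r ha2 hr0]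
    have htop2 : F (k+1) a (p + p) = 2^(k+1) := by
      rw [hdl p hp1 le_rfl, hptop]; omega
    have := (F_top_iff (k+1) a (p+p) (by omega) (by omega)).1 htop2
    simpa [two_mul] using this
  · have h1 := (F_top_iff (k+1) a p (by omega) hp1).1 hD
    exact h1.trans ⟨2, by omega⟩

lemma P4_next (k : ℕ) (hP4 : ∀ a, 1 ≤ a → a ≤ 2^k → F k a (2^k) = 2^k) : ∀ a, 1 ≤ a → a ≤ 2^(k+1) → F (k+1) a (2^(k+1)) = 2^(k+1) := by
  have hh : 1 ≤ 2^k := Nat.one_le_two_pow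
  have hN : 2^(k+1) = 2 * 2^k := by rw [pow_succ]; ring
  intro a ha1 ha2
  rcases Nat.eq_or_lt_of_le ha2 with haN | haN
  · rw [haN] at *; exact F_stop (k+1) _ _ le_rfl
  · have hdvd : piF (k+1) a ∣ 2^(k+1) := by
      rcases lt_trichotomy a (2^k) with hlt | heq | hgt
      · have h1 := dich k hP4 a ha1 hlt
        have h2 : piF k a ∣ 2^k :=
          (F_top_iff k a (2^k) hlt hh).1 (hP4 a ha1 (by omega))
        have h3 : 2 * piF k a ∣ 2 * 2^k := mul_dvd_mul_left 2 h2
        rw [← hN] at h3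
        exact h1.trans h3
      · subst heq
        have := row_half k hP4 (2^k) hh le_rfl
        have h1 := (F_top_iff (k+1) (2^k) (2^k) (by omega) hh).1 (by omega)
        exact h1.trans ⟨2, by omega⟩
      · have := upper_col_half k hP4 a hgt haN
        have h1 := (F_top_iff (k+1) a (2^k) haN hh).1 this
        exact h1.trans ⟨2, by omega⟩
    exact (F_top_iff (k+1) a (2^(k+1)) haN (by omega)).2 hdvd

end LevelStep

lemma P4all : ∀ k, ∀ a, 1 ≤ a → a ≤ 2^k → F k a (2^k) = 2^k := by
  intro k
  induction k with
  | zero =>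
    intro a ha1 ha2
    exact F_stop 0 a (2^0) (by simpa using ha1)
  | succ k ih => exact P4_next k ih

lemma Rall (k : ℕ) : ∀ y, 1 ≤ y → y ≤ 2^k → F (k+1) (2^k) y = 2^k + y :=
  row_half k (P4all k)

lemma half_mult_cases (h z : ℕ) (hz : z % h = 0) (h1 : 0 < z) (h2 : z ≤ 2 * h) :
    z = h ∨ z = 2 * h := by
  obtain ⟨q, hq⟩ := Nat.dvd_of_mod_eq_zero hz
  have hh : 1 ≤ h := by
    rcases Nat.eq_zero_or_pos h with rfl | h; · omega
    · exact h
  have hq1 : 1 ≤ q := by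
    rcases Nat.eq_zero_or_pos q with rfl | h; · omega
    · exact h
  have hq2 : q ≤ 2 := by
    by_contra h3
    have : h * 3 ≤ h * q := Nat.mul_le_mul_left _ (by omega)
    omega
  interval_cases q
  · left; omega
  · right; omega


lemma Wlem (j : ℕ) (hj : 1 ≤ j) (x : ℕ) (hx1 : 2^j < x) (hx2 : x < 2^(j+1)) :
    F (j+2) x (2^j) = 2^(j+2) := by
  have hh : 1 ≤ 2^j := Nat.one_le_two_pow
  have hN1 : 2^(j+1) = 2 * 2^j := by rw [pow_succ]; ring
  have hN2 : 2^(j+2) = 2 * 2^(j+1) := by rw [pow_succ]; ring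
  -- period of row x at level j+1 divides 2^(j+1) and is < 2^j
  have hple : piF (j+1) x ≤ 2^(j+1) - x := piF_le (j+1) x hx2
  have hpd : piF (j+1) x ∣ 2^(j+1) :=
    (F_top_iff (j+1) x (2^(j+1)) hx2 (by omega)).1 (P4all (j+1) x (by omega) (by omega))
  obtain ⟨i, hi, hpi⟩ := (Nat.dvd_prime_pow Nat.prime_two).mp hpd
  have hplt : piF (j+1) x < 2^j := by omega
  have hij : i < j := by
    rw [hpi] at hplt
    exact (Nat.pow_lt_pow_iff_right (by norm_num)).mp hplt
  have h2p : 2 * piF (j+1) x ∣ 2^j := by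
    rw [hpi, ← pow_succ']
    exact pow_dvd_pow 2 hij
  have hd := dich (j+1) (P4all (j+1)) x (by omega) hx2
  exact (F_top_iff (j+2) x (2^j) (by omega) hh).2 (hd.trans h2p)

lemma Glem (j : ℕ) (hj : 1 ≤ j) : F (j+2) (2^j) (2^j) = 2^(j+1) := by
  have hh : 1 ≤ 2^j := Nat.one_le_two_pow
  have hN1 : 2^(j+1) = 2 * 2^j := by rw [pow_succ]; ring
  have hN2 : 2^(j+2) = 2 * 2^(j+1) := by rw [pow_succ]; ring
  -- dichotomy for D := F (j+2) (2^j) (2^j)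
  have hc := CONG (j+1) (P4all (j+1)) (2^j) (by omega) (by omega) (2^j) (by omega) (by omega)
  rw [rho_eq_self _ _ (by omega) (by omega)] at hc
  rw [Rall j (2^j) hh le_rfl] at hc
  rw [show 2^j + 2^j = 2^(j+1) by omega, Nat.mod_self] at hc
  have hc : F (j+2) (2^j) (2^j) % 2^(j+1) = 0 := hc
  have hb := F_bounds (j+2) (2^j) (2^j) (by omega) hh
  have hcand : F (j+2) (2^j) (2^j) = 2^(j+1) ∨ F (j+2) (2^j) (2^j) = 2^(j+2) := by
    rcases half_mult_cases (2^(j+1)) _ hc (by omega) (by omega) with h1 | h1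
    · left; omega
    · right; omega
  rcases hcand with hD | hD
  · exact hD
  exfalso
  -- the descending chain
  have chain : ∀ r, r ≤ 2^j - 1 → F (j+2) (2^j) (2^j - r) = 2^(j+2) - r := by
    intro r
    induction r with
    | zero => intro _; simpa using hD
    | succ r ihr =>
      intro hr2
      have ih := ihr (by omega)
      set c := 2^j - (r+1) with hcdef
      have hc1 : 1 ≤ c := by omega
      have hcc : c + 1 = 2^j - r := by omega
      set u := F (j+2) (2^j) c with hu
      have hub := F_bounds (j+2) (2^j) c (by omega) hc1
      have hrecu : F (j+2) (2^j) (c+1) = F (j+2) u (2^j + 1) := F_rec (j+2) (2^j) c (by omega) hc1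
      rw [hcc, ih] at hrecu
      -- congruence: u ≡ 2^(j+1) - (r+1) mod 2^(j+1)
      have hcu := CONG (j+1) (P4all (j+1)) (2^j) (by omega) (by omega) c hc1 (by omega)
      rw [rho_eq_self _ _ (by omega) (by omega), rho_eq_self _ _ hc1 (by omega),
        Rall j c hc1 (by omega)] at hcu
      have hcu : F (j+2) (2^j) c % 2^(j+1) = (2^j + c) % 2^(j+1) := hcu
      have humod : u % 2^(j+1) = 2^(j+1) - (r+1) := by
        rw [← hu] at hcu
        rw [hcu, Nat.mod_eq_of_lt (by omega)]
        omega
      -- u = 2^(j+1) - (r+1) or u = 2^(j+2) - (r+1)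
      have hucase : u = 2^(j+1) - (r+1) ∨ u = 2^(j+2) - (r+1) := by
        rcases le_or_gt u (2^(j+1)) with hle | hlt
        · left
          apply mod_window_eq (2^(j+1)) 0
          · rw [humod, Nat.mod_eq_of_lt (by omega)]
          · omega
          · omega
          · omega
          · omega
        · right
          apply mod_window_eq (2^(j+1)) (2^(j+1))
          · rw [humod]
            have : 2^(j+2) - (r+1) = 2^(j+1) + (2^(j+1) - (r+1)) := by omega
            rw [this, Nat.add_mod_left, Nat.mod_eq_of_lt (by omega)]
          · omega
          · omega
          · omega
          · omega
      rcases hucase with hu1 | hu1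
      · -- u in second quarter: contradiction with chain value
        exfalso
        have hurange : 2^j < u ∧ u < 2^(j+1) := by omega
        have hstep : F (j+2) u (2^j + 1) = u + 1 := by
          rw [F_rec (j+2) u (2^j) (by omega) hh, Wlem j hj u hurange.1 hurange.2,
            F_stop (j+2) _ _ le_rfl]
        rw [hstep] at hrecu
        omega
      · exact hu1
  have hfin := chain (2^j - 1) le_rfl
  rw [show 2^j - (2^j - 1) = 1 by omega, F_one (j+2) (2^j) (by omega)] at hfin
  omega

open Fin.NatCast in
lemma ld_row0 (m : ℕ) (op : Fin (2^m) → Fin (2^m) → Fin (2^m))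
    (hop : IsCyclicLD m op) : ∀ j : ℕ, 1 ≤ j → op 0 (↑j) = ↑j := by
  have h1 : op 0 1 = 1 := by rw [hop.2 0, zero_add]
  intro j hj
  induction j with
  | zero => omega
  | succ j ihj =>
    rcases Nat.eq_zero_or_pos j with rfl | hj0
    · rw [Nat.cast_one, h1]
    · have e : (↑(j+1) : Fin (2^m)) = op (↑j) 1 := by
        rw [hop.2, Nat.cast_add, Nat.cast_one]
      rw [e, hop.1 0 (↑j) 1, ihj hj0, h1]

open Fin.NatCast in
lemma ld_uniq (m : ℕ) (op : Fin (2^m) → Fin (2^m) → Fin (2^m))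
    (hop : IsCyclicLD m op) :
    ∀ (t a : ℕ), 2^m - a ≤ t → 1 ≤ a → a ≤ 2^m → ∀ b : ℕ, 1 ≤ b → b ≤ 2^m →
      op (↑a) (↑b) = ↑(F m a b) := by
  intro t
  induction t with
  | zero =>
    intro a ht ha1 ha2 b hb1 hb2
    have haN : a = 2^m := by omega
    subst haN
    have e0 : ((2^m : ℕ) : Fin (2^m)) = 0 := by simp
    rw [e0, ld_row0 m op hop b hb1, F_stop m _ _ le_rfl]
  | succ t ih =>
    intro a ht ha1 ha2 b hb1 hb2
    rcases Nat.eq_or_lt_of_le ha2 with haN | haN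
    · -- a = 2^m : row of 0
      subst haN
      have e0 : ((2^m : ℕ) : Fin (2^m)) = 0 := by
        simp
      rw [e0, ld_row0 m op hop b hb1, F_stop m _ _ le_rfl]
    · induction b with
      | zero => omega
      | succ b ihb =>
        rcases Nat.eq_zero_or_pos b with rfl | hb0
        · -- column 1
          rw [Nat.cast_one, hop.2, F_one m a haN, Nat.cast_add, Nat.cast_one]
        · have e : (↑(b+1) : Fin (2^m)) = op (↑b) 1 := by
            rw [hop.2, Nat.cast_add, Nat.cast_one]
          have e2 : op (↑a) 1 = ((↑(a+1) : Fin (2^m))) := by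
            rw [hop.2, Nat.cast_add, Nat.cast_one]
          rw [e, hop.1 (↑a) (↑b) 1, ihb hb0 (by omega), e2]
          have hub := F_bounds m a b haN hb0
          have houter := ih (F m a b) (by omega) (by omega) hub.2 (a+1) (by omega) (by omega)
          rw [houter, ← F_rec m a b haN hb0]

open Fin.NatCast in
/-- in `A_{n+2}`, `(2^n − 1) *_{n+2} 2 = 2^{n+1}`. -/
theorem pred_pow_mul_two (n : ℕ)
    (op : Fin (2^(n+2)) → Fin (2^(n+2)) → Fin (2^(n+2))) (hop : IsCyclicLD (n+2) op) :
    op ((2^n - 1 : ℕ) : Fin (2^(n+2))) ((2 : ℕ) : Fin (2^(n+2))) =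
      ((2^(n+1) : ℕ) : Fin (2^(n+2))) := by
  rcases Nat.eq_zero_or_pos n with rfl | hn
  · -- n = 0
    norm_num
    have := ld_row0 2 op hop 2 (by norm_num)
    norm_num at this
    exact this
  · have hm : 2 ≤ 2^n := by
      calc 2 = 2^1 := (pow_one 2).symm
      _ ≤ 2^n := Nat.pow_le_pow_right (by norm_num) hn
    have hNm : 2^n < 2^(n+2) := by
      have : 2^(n+2) = 4 * 2^n := by rw [pow_add]; ring
      omega
    have key := ld_uniq (n+2) op hop (2^(n+2)) (2^n - 1) (by omega) (by omega)
      (by omega) 2 (by norm_num) (by omega)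
    rw [key]
    have e1 : F (n+2) (2^n - 1) 2 = F (n+2) (2^n) (2^n) := by
      have := F_rec (n+2) (2^n - 1) 1 (by omega) le_rfl
      rw [show (1:ℕ) + 1 = 2 from rfl] at this
      rw [this, F_one (n+2) _ (by omega), show 2^n - 1 + 1 = 2^n by omega]
    rw [e1, Glem n hn]
end

section
/- Let n ≥ 1 and let a < 2^{n−1} be such that the period of a doubles from A_n to A_{n+1} (i.e. p_{n+1}(a) = 2·p_n(a); this is the algebraic translation of 'γ_n is in the range of a'). Let c + 1 = t_n(a) be the threshold of a in A_n. Then a *_{n+1} c < 2^{n−1} (equivalently, the value of the word a·c is the same computed in A_{n+1}, A_n and A_{n−1}), and a ∘_{n+1} c < 2^n (equivalently, the value of the word a∘c is the same computed in A_{n+1} and A_n). -/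
open Fin.NatCast

/-- Composition on `A_m`: `x ∘_m y = (x *_m (y+1)) − 1 (mod 2^m)`. -/
def comp (m : ℕ) (op : Fin (2^m) → Fin (2^m) → Fin (2^m)) (x y : Fin (2^m)) : Fin (2^m) :=
  op x (y + 1) - 1

section Generic
variable {m : ℕ}

lemma cast_addone (k : ℕ) : ((k+1 : ℕ) : Fin (2^m)) = ((k : ℕ) : Fin (2^m)) + 1 := by
  push_cast; ring

lemma val_addone (x : Fin (2^m)) : (x + 1).val = (x.val + 1) % 2^m := by
  have h1 : ((1 : ℕ) : Fin (2^m)) = (1 : Fin (2^m)) := by push_cast; ring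
  rw [Fin.add_def, ← h1, Fin.val_natCast, Nat.add_mod x.val 1, Nat.mod_eq_of_lt x.isLt]

variable {op : Fin (2^m) → Fin (2^m) → Fin (2^m)}

lemma rec1 (hop : IsCyclicLD m op) (a b : Fin (2^m)) :
    op a (b + 1) = op (op a b) (a + 1) := by
  have h := hop.1 a b 1
  rwa [hop.2 b, hop.2 a] at h

lemma zero_row (hop : IsCyclicLD m op) (y : Fin (2^m)) : op 0 y = y := by
  have key : ∀ k : ℕ, 1 ≤ k → op 0 ((k : ℕ) : Fin (2^m)) = ((k : ℕ) : Fin (2^m)) := by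
    intro k hk
    induction k with
    | zero => omega
    | succ k ih =>
      rcases Nat.lt_or_ge 1 (k+1) with h | h
      · have hk1 : 1 ≤ k := by omega
        rw [cast_addone, rec1 hop, ih hk1, zero_add, hop.2]
      · have hk0 : k = 0 := by omega
        subst hk0
        have := hop.2 0
        rw [zero_add] at this
        simpa using this
  rcases eq_or_ne y 0 with h | h
  · subst h
    have h2 : ((2^m : ℕ) : Fin (2^m)) = 0 := by simp
    calc op 0 0 = op 0 ((2^m : ℕ) : Fin (2^m)) := by rw [h2]
      _ = ((2^m : ℕ) : Fin (2^m)) := key _ Nat.one_le_two_pow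
      _ = 0 := h2
  · have hv : 1 ≤ y.val := by
      by_contra h0
      exact h (Fin.ext (by simp only [Fin.val_zero]; omega))
    have := key y.val hv
    rwa [Fin.cast_val_eq_self] at this

lemma gt_or_zero (hop : IsCyclicLD m op) (x y : Fin (2^m)) :
    op x y = 0 ∨ x.val < (op x y).val := by
  suffices h : ∀ d, ∀ x : Fin (2^m), 2^m - x.val ≤ d → ∀ y,
      op x y = 0 ∨ x.val < (op x y).val from h (2^m) x (by omega) y
  intro d
  induction d with
  | zero =>
    intro x hx
    exact absurd hx (by have := x.isLt; omega)
  | succ d ih =>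
    intro x hx y
    have succ_case : x + 1 = 0 ∨ x.val < (x + 1).val := by
      rcases eq_or_ne (x.val + 1) (2^m) with h | h
      · left
        apply Fin.ext
        rw [val_addone, h, Nat.mod_self, Fin.val_zero]
      · right
        rw [val_addone, Nat.mod_eq_of_lt (by have := x.isLt; omega)]
        omega
    have inner : ∀ k : ℕ, 1 ≤ k → op x ((k:ℕ) : Fin (2^m)) = 0 ∨
        x.val < (op x ((k:ℕ):Fin (2^m))).val := by
      intro k hk
      induction k with
      | zero => omega
      | succ k ihk =>
        rcases Nat.lt_or_ge 1 (k+1) with hk1 | hk1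
        · have hk' := ihk (by omega)
          rw [cast_addone, rec1 hop]
          rcases hk' with h | h
          · rw [h, zero_row hop]
            exact succ_case
          · rcases ih (op x ((k:ℕ):Fin (2^m)))
              (by have := (op x ((k:ℕ):Fin (2^m))).isLt; omega) (x+1) with h2 | h2
            · exact Or.inl h2
            · exact Or.inr (lt_trans h h2)
        · have hk0 : k = 0 := by omega
          subst hk0
          have e : ((0+1:ℕ) : Fin (2^m)) = 1 := by push_cast; ring
          rw [e, hop.2]
          exact succ_case
    rcases eq_or_ne y 0 with h | h
    · subst h
      have h2 : ((2^m : ℕ) : Fin (2^m)) = 0 := by simp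
      have := inner (2^m) Nat.one_le_two_pow
      rwa [h2] at this
    · have hv : 1 ≤ y.val := by
        by_contra h0
        exact h (Fin.ext (by simp only [Fin.val_zero]; omega))
      have := inner y.val hv
      rwa [Fin.cast_val_eq_self] at this

lemma row_zero (hop : IsCyclicLD m op) (a : Fin (2^m)) : op a 0 = 0 := by
  have h := hop.1 a 0 0
  rw [zero_row hop 0] at h
  rcases gt_or_zero hop (op a 0) (op a 0) with h2 | h2
  · rw [h]; exact h2
  · rw [← h] at h2
    exact absurd h2 (lt_irrefl _)

lemma period_mem (hop : IsCyclicLD m op) (a : Fin (2^m)) :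
    0 < period m op a ∧ op a ((period m op a : ℕ) : Fin (2^m)) = 0 := by
  apply Nat.sInf_mem (s := {p : ℕ | 0 < p ∧ op a ((p : ℕ) : Fin (2^m)) = 0})
  exact ⟨2^m, Nat.two_pow_pos m, by
    rw [show ((2^m : ℕ) : Fin (2^m)) = 0 by simp, row_zero hop]⟩

lemma period_min (a : Fin (2^m)) {k : ℕ} (hk : 0 < k)
    (h : op a ((k:ℕ) : Fin (2^m)) = 0) : period m op a ≤ k :=
  Nat.sInf_le ⟨hk, h⟩

lemma per_add (hop : IsCyclicLD m op) (a : Fin (2^m)) (y : ℕ) :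
    op a ((y + period m op a : ℕ) : Fin (2^m)) = op a ((y:ℕ) : Fin (2^m)) := by
  induction y with
  | zero =>
    simp only [Nat.zero_add, Nat.cast_zero]
    rw [(period_mem hop a).2, row_zero hop]
  | succ y ih =>
    have e1 : ((y + 1 + period m op a : ℕ) : Fin (2^m))
        = ((y + period m op a : ℕ) : Fin (2^m)) + 1 := by rw [Nat.add_right_comm, cast_addone]
    rw [e1, rec1 hop, ih, ← rec1 hop, ← cast_addone]

lemma per_add_mul (hop : IsCyclicLD m op) (a : Fin (2^m)) (r q : ℕ) :
    op a ((r + q * period m op a : ℕ) : Fin (2^m)) = op a ((r:ℕ) : Fin (2^m)) := by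
  induction q with
  | zero => simp
  | succ q ih =>
    rw [show r + (q+1) * period m op a = (r + q * period m op a) + period m op a by ring,
      per_add hop, ih]

lemma per_mod (hop : IsCyclicLD m op) (a : Fin (2^m)) (k : ℕ) :
    op a ((k : ℕ) : Fin (2^m)) = op a ((k % period m op a : ℕ) : Fin (2^m)) := by
  have h := per_add_mul hop a (k % period m op a) (k / period m op a)
  rw [Nat.mod_add_div'] at h
  exact h

lemma row_lt_succ (hop : IsCyclicLD m op) (a : Fin (2^m)) (k : ℕ)
    (hk2 : k + 1 < period m op a) :
    (op a ((k:ℕ) : Fin (2^m))).val < (op a ((k+1:ℕ) : Fin (2^m))).val := by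
  rw [cast_addone, rec1 hop]
  rcases gt_or_zero hop (op a ((k:ℕ):Fin (2^m))) (a+1) with h | h
  · exfalso
    have : period m op a ≤ k + 1 :=
      period_min a (by omega) (by rw [cast_addone, rec1 hop]; exact h)
    omega
  · exact h

lemma row_mono (hop : IsCyclicLD m op) (a : Fin (2^m)) :
    ∀ k j : ℕ, j < k → k < period m op a →
    (op a ((j:ℕ):Fin (2^m))).val < (op a ((k:ℕ):Fin (2^m))).val := by
  intro k
  induction k with
  | zero => intro j h _; omega
  | succ k ih =>
    intro j hj hk
    rcases Nat.lt_or_ge j k with h | h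
    · exact lt_trans (ih j h (by omega)) (row_lt_succ hop a k hk)
    · have : j = k := by omega
      subst this
      exact row_lt_succ hop a j hk

end Generic

section Proj
variable {m : ℕ} {op₀ : Fin (2^m) → Fin (2^m) → Fin (2^m)}
  {op₁ : Fin (2^(m+1)) → Fin (2^(m+1)) → Fin (2^(m+1))}

lemma addone_mod (N A : ℕ) : (A % N + 1) % N = (A + 1) % N := by
  conv_rhs => rw [Nat.add_mod]
  conv_lhs => rw [Nat.add_mod, Nat.mod_mod_of_dvd A (dvd_refl N)]

lemma pow_dvd_succ : (2^m : ℕ) ∣ 2^(m+1) := ⟨2, by ring⟩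

lemma proj (hop₀ : IsCyclicLD m op₀) (hop₁ : IsCyclicLD (m+1) op₁) :
    ∀ (x : Fin (2^(m+1))) (y : ℕ),
      (op₁ x ((y:ℕ) : Fin (2^(m+1)))).val % 2^m
        = (op₀ ((x.val : ℕ) : Fin (2^m)) ((y:ℕ) : Fin (2^m))).val := by
  suffices h : ∀ d, ∀ x : Fin (2^(m+1)), 2^(m+1) - x.val ≤ d → ∀ y : ℕ,
      (op₁ x ((y:ℕ) : Fin (2^(m+1)))).val % 2^m
        = (op₀ ((x.val : ℕ) : Fin (2^m)) ((y:ℕ) : Fin (2^m))).val from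
    fun x y => h (2^(m+1)) x (by omega) y
  intro d
  induction d with
  | zero =>
    intro x hx
    exact absurd hx (by have := x.isLt; omega)
  | succ d ih =>
    intro x hx y
    induction y with
    | zero =>
      simp only [Nat.cast_zero]
      rw [row_zero hop₁, row_zero hop₀]
      simp
    | succ y ihy =>
      rw [cast_addone, cast_addone, rec1 hop₁, rec1 hop₀]
      have hww : (((op₁ x ((y:ℕ) : Fin (2^(m+1)))).val : ℕ) : Fin (2^m))
          = op₀ ((x.val : ℕ) : Fin (2^m)) ((y:ℕ) : Fin (2^m)) := by
        apply Fin.ext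
        rw [Fin.val_natCast]
        exact ihy
      rcases eq_or_ne (op₁ x ((y:ℕ) : Fin (2^(m+1)))) 0 with h0 | h0
      · have h0' : op₀ ((x.val : ℕ) : Fin (2^m)) ((y:ℕ) : Fin (2^m)) = 0 := by
          rw [← hww, h0]
          simp
        rw [h0, h0', zero_row hop₁, zero_row hop₀]
        rw [val_addone, val_addone, Fin.val_natCast,
          Nat.mod_mod_of_dvd _ pow_dvd_succ, addone_mod]
      · have hlt : x.val < (op₁ x ((y:ℕ) : Fin (2^(m+1)))).val := by
          rcases gt_or_zero hop₁ x ((y:ℕ) : Fin (2^(m+1))) with h | h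
          · exact absurd h h0
          · exact h
        have kout := ih (op₁ x ((y:ℕ) : Fin (2^(m+1))))
          (by have := (op₁ x ((y:ℕ) : Fin (2^(m+1)))).isLt; omega) (x.val + 1)
        have e1 : ((x.val + 1 : ℕ) : Fin (2^(m+1))) = x + 1 := by
          apply Fin.ext
          rw [Fin.val_natCast, val_addone]
        have e2 : ((x.val + 1 : ℕ) : Fin (2^m)) = ((x.val : ℕ) : Fin (2^m)) + 1 :=
          cast_addone x.val
        rw [e1, e2, hww] at kout
        exact kout

lemma proj' (hop₀ : IsCyclicLD m op₀) (hop₁ : IsCyclicLD (m+1) op₁) (x y : ℕ) :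
    (op₁ ((x:ℕ) : Fin (2^(m+1))) ((y:ℕ) : Fin (2^(m+1)))).val % 2^m
      = (op₀ ((x:ℕ) : Fin (2^m)) ((y:ℕ) : Fin (2^m))).val := by
  have h := proj hop₀ hop₁ ((x:ℕ) : Fin (2^(m+1))) y
  have e : (((((x:ℕ) : Fin (2^(m+1))).val : ℕ)) : Fin (2^m)) = ((x:ℕ) : Fin (2^m)) := by
    apply Fin.ext
    rw [Fin.val_natCast, Fin.val_natCast, Fin.val_natCast,
      Nat.mod_mod_of_dvd _ pow_dvd_succ]
  rwa [e] at h

end Proj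

/-- Lemma 5.3: let `n ≥ 1`, `a < 2^{n−1}` be such that the period of `a`
doubles from `A_n` to `A_{n+1}` (i.e. `γ_n` is in the range of `a`), and let
`c + 1 = t_n(a)` be the threshold of `a` in `A_n`.  Then `a *_{n+1} c < 2^{n−1}`
and `a ∘_{n+1} c < 2^n`. -/
theorem word_values_stable (n : ℕ) (hn : 1 ≤ n) (a : ℕ) (ha : a < 2^(n-1))
    (op₀ : Fin (2^n) → Fin (2^n) → Fin (2^n)) (hop₀ : IsCyclicLD n op₀)
    (op₁ : Fin (2^(n+1)) → Fin (2^(n+1)) → Fin (2^(n+1))) (hop₁ : IsCyclicLD (n+1) op₁)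
    (hdouble : period (n+1) op₁ ((a : ℕ) : Fin (2^(n+1))) =
      2 * period n op₀ ((a : ℕ) : Fin (2^n)))
    (c : ℕ)
    (hc : IsLeast {x : ℕ | 2^(n-1) ≤ (op₀ ((a : ℕ) : Fin (2^n)) ((x : ℕ) : Fin (2^n))).val}
      (c + 1)) :
    (op₁ ((a : ℕ) : Fin (2^(n+1))) ((c : ℕ) : Fin (2^(n+1)))).val < 2^(n-1) ∧
    (comp (n+1) op₁ ((a : ℕ) : Fin (2^(n+1))) ((c : ℕ) : Fin (2^(n+1)))).val < 2^n := by
  have hone : (1:ℕ) ≤ 2^(n-1) := Nat.one_le_two_pow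
  have hmem := period_mem hop₀ ((a : ℕ) : Fin (2^n))
  have hp₀pos : 0 < period n op₀ ((a : ℕ) : Fin (2^n)) := hmem.1
  -- c + 1 < p₀
  have hcp : c + 1 < period n op₀ ((a : ℕ) : Fin (2^n)) := by
    have h1 := hc.1
    have hmod := per_mod hop₀ ((a : ℕ) : Fin (2^n)) (c+1)
    have hr_le : (c+1) % period n op₀ ((a : ℕ) : Fin (2^n)) ≤ c + 1 := Nat.mod_le _ _
    have hrin : (c+1) % period n op₀ ((a : ℕ) : Fin (2^n)) ∈
        {x : ℕ | 2^(n-1) ≤ (op₀ ((a : ℕ) : Fin (2^n)) ((x : ℕ) : Fin (2^n))).val} := by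
      rw [Set.mem_setOf_eq, ← hmod]
      exact h1
    have hge := hc.2 hrin
    have heq : (c+1) % period n op₀ ((a : ℕ) : Fin (2^n)) = c + 1 :=
      le_antisymm hr_le hge
    have := Nat.mod_lt (c+1) hp₀pos
    omega
  have hp0ne : op₁ ((a : ℕ) : Fin (2^(n+1)))
      ((period n op₀ ((a : ℕ) : Fin (2^n)) : ℕ) : Fin (2^(n+1))) ≠ 0 := by
    intro h
    have := period_min ((a : ℕ) : Fin (2^(n+1))) hp₀pos h
    omega
  have hvalp₀ : (op₁ ((a : ℕ) : Fin (2^(n+1)))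
      ((period n op₀ ((a : ℕ) : Fin (2^n)) : ℕ) : Fin (2^(n+1)))).val = 2^n := by
    have h1 := proj' hop₀ hop₁ a (period n op₀ ((a : ℕ) : Fin (2^n)))
    rw [hmem.2] at h1
    simp only [Fin.val_zero] at h1
    have h2 := (op₁ ((a : ℕ) : Fin (2^(n+1)))
      ((period n op₀ ((a : ℕ) : Fin (2^n)) : ℕ) : Fin (2^(n+1)))).isLt
    have h3 : (op₁ ((a : ℕ) : Fin (2^(n+1)))
        ((period n op₀ ((a : ℕ) : Fin (2^n)) : ℕ) : Fin (2^(n+1)))).val ≠ 0 := by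
      intro h
      exact hp0ne (Fin.ext (by simp [h]))
    obtain ⟨k, hk⟩ := Nat.dvd_of_mod_eq_zero h1
    have hp2 : (2:ℕ)^(n+1) = 2^n * 2 := by ring
    have hkpos : 0 < 2^n := Nat.two_pow_pos n
    have hk2 : k < 2 := by
      by_contra hge
      push_neg at hge
      have h5 : 2^n * 2 ≤ 2^n * k := Nat.mul_le_mul_left _ hge
      omega
    have hk0 : k ≠ 0 := by
      rintro rfl
      rw [mul_zero] at hk
      exact h3 hk
    have hk1 : k = 1 := by omega
    rw [hk1, mul_one] at hk
    exact hk
  -- values agree below p₀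
  have key : ∀ b : ℕ, b < period n op₀ ((a : ℕ) : Fin (2^n)) →
      (op₁ ((a : ℕ) : Fin (2^(n+1))) ((b : ℕ) : Fin (2^(n+1)))).val
        = (op₀ ((a : ℕ) : Fin (2^n)) ((b : ℕ) : Fin (2^n))).val := by
    intro b hb
    have hlt : (op₁ ((a : ℕ) : Fin (2^(n+1))) ((b : ℕ) : Fin (2^(n+1)))).val < 2^n := by
      rcases Nat.eq_zero_or_pos b with rfl | hbpos
      · simp only [Nat.cast_zero]
        rw [row_zero hop₁]
        simp [Nat.two_pow_pos n]
      · have hmono := row_mono hop₁ ((a : ℕ) : Fin (2^(n+1)))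
          (period n op₀ ((a : ℕ) : Fin (2^n))) b hb (by omega)
        rw [hvalp₀] at hmono
        exact hmono
    have h := proj' hop₀ hop₁ a b
    rw [Nat.mod_eq_of_lt hlt] at h
    exact h
  constructor
  · rw [key c (by omega)]
    by_contra h
    push_neg at h
    have hcin : c ∈ {x : ℕ | 2^(n-1) ≤ (op₀ ((a : ℕ) : Fin (2^n)) ((x : ℕ) : Fin (2^n))).val} := h
    have := hc.2 hcin
    omega
  · show (op₁ ((a : ℕ) : Fin (2^(n+1))) (((c : ℕ) : Fin (2^(n+1))) + 1) - 1).val < 2^n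
    rw [← cast_addone]
    have hv := key (c+1) hcp
    have hvlo : 2^(n-1) ≤ (op₁ ((a : ℕ) : Fin (2^(n+1))) ((c + 1 : ℕ) : Fin (2^(n+1)))).val := by
      rw [hv]; exact hc.1
    have hvhi : (op₁ ((a : ℕ) : Fin (2^(n+1))) ((c + 1 : ℕ) : Fin (2^(n+1)))).val < 2^n := by
      rw [hv]; exact (op₀ ((a : ℕ) : Fin (2^n)) ((c + 1 : ℕ) : Fin (2^n))).isLt
    set X := op₁ ((a : ℕ) : Fin (2^(n+1))) ((c + 1 : ℕ) : Fin (2^(n+1))) with hXdef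
    have hXlt : X.val < 2^(n+1) := X.isLt
    have h1le : 1 ≤ X.val := le_trans hone hvlo
    have hY : X = ((X.val - 1 : ℕ) : Fin (2^(n+1))) + 1 := by
      apply Fin.ext
      rw [val_addone, Fin.val_natCast, Nat.mod_eq_of_lt (show X.val - 1 < 2^(n+1) by omega),
        Nat.mod_eq_of_lt (show X.val - 1 + 1 < 2^(n+1) by omega)]
      omega
    rw [hY, add_sub_cancel_right, Fin.val_natCast,
      Nat.mod_eq_of_lt (show X.val - 1 < 2^(n+1) by omega)]
    omega
end
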